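/- arXiv:1606.01327 — 11 statements merged into one kernel-verified Lean document; each statement's English description precedes it below -/
import Mathlib

section
/- Let f: ℝⁿ → ℝ be differentiable and let L: ℝⁿ → ℝⁿ be a positive definite self-adjoint linear operator, and β ≥ 0. Then |f(x) - f(y) - ⟨∇f(y), x-y⟩| ≤ (β/2)⟨L(x-y), x-y⟩ for all x, y if and only if ⟨L⁻¹(∇f(x) - ∇f(y)), ∇f(x) - ∇f(y)⟩ ≤ β²⟨L(x-y), x-y⟩ for all x, y. -/
open scoped RealInnerProductSpace

private theorem csL {n : ℕ} (L : EuclideanSpace ℝ (Fin n) →L[ℝ] EuclideanSpace ℝ (Fin n))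
    (hLsa : ∀ x y, ⟪L x, y⟫ = ⟪x, L y⟫)
    (hLpd : ∃ m > (0:ℝ), ∀ x, m * ‖x‖^2 ≤ ⟪L x, x⟫)
    (a d : EuclideanSpace ℝ (Fin n)) :
    ⟪L a, d⟫^2 ≤ ⟪L a, a⟫ * ⟪L d, d⟫ := by
  obtain ⟨m, hm, hmle⟩ := hLpd
  by_cases hd : d = 0
  · subst hd; simp
  · have hD : 0 < ⟪L d, d⟫ := by
      have h1 : 0 < m * ‖d‖^2 := by
        have : 0 < ‖d‖ := norm_pos_iff.mpr hd
        positivity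
      linarith [hmle d]
    set D := ⟪L d, d⟫ with hDdef
    have hsw : ⟪L d, a⟫ = ⟪L a, d⟫ := by rw [hLsa d a, real_inner_comm]
    have key : 0 ≤ ⟪L (D • a - ⟪L a, d⟫ • d), D • a - ⟪L a, d⟫ • d⟫ := by
      refine le_trans ?_ (hmle _); positivity
    have expand : ⟪L (D • a - ⟪L a, d⟫ • d), D • a - ⟪L a, d⟫ • d⟫
        = D^2 * ⟪L a, a⟫ - 2 * D * ⟪L a, d⟫^2 + ⟪L a, d⟫^2 * D := by
      simp only [map_sub, map_smul, inner_sub_left, inner_sub_right,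
        real_inner_smul_left, real_inner_smul_right, hsw, ← hDdef]
      ring
    rw [expand] at key
    nlinarith [key, hD]

set_option maxHeartbeats 1000000 in
private theorem key_ineq {n : ℕ} (f : EuclideanSpace ℝ (Fin n) → ℝ)
    (f' : EuclideanSpace ℝ (Fin n) → EuclideanSpace ℝ (Fin n))
    (L Linv : EuclideanSpace ℝ (Fin n) →L[ℝ] EuclideanSpace ℝ (Fin n))
    (hLsa : ∀ x y, ⟪L x, y⟫ = ⟪x, L y⟫)
    (hLinv : ∀ x, Linv (L x) = x ∧ L (Linv x) = x)
    (β : ℝ)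
    (H1 : ∀ x y, |f x - f y - ⟪f' y, x - y⟫| ≤ β/2 * ⟪L (x - y), x - y⟫)
    (ε : ℝ) (hε : ε = 1 ∨ ε = -1) (x y : EuclideanSpace ℝ (Fin n)) (t : ℝ) :
    t * ⟪β • (L (x - y)) + ε • (f' x - f' y), Linv (β • (L (x - y)) + ε • (f' x - f' y))⟫ ≤
      β * t^2 * ⟪β • (L (x - y)) + ε • (f' x - f' y), Linv (β • (L (x - y)) + ε • (f' x - f' y))⟫
      + (β/2 * ⟪L (x - y), x - y⟫ + ε * (f x - f y - ⟪f' y, x - y⟫)) := by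
  set d := x - y with hd
  set u := β • (L d) + ε • (f' x - f' y) with hu
  set w := Linv u with hw
  set z := x - t • w with hz
  have hLw : L w = u := (hLinv u).2
  have hzx : z - x = -(t • w) := by rw [hz]; abel
  have hzy : z - y = d - t • w := by rw [hz, hd]; abel
  set σ := ⟪u, w⟫ with hσ
  have hcr : ⟪u, d⟫ = ⟪L d, w⟫ := by
    rw [← hLw, hLsa, real_inner_comm]
  have e3 : ⟪L (z - x), z - x⟫ = t^2 * σ := by
    rw [hzx]
    simp only [map_neg, map_smul, inner_neg_neg, real_inner_smul_left,
      real_inner_smul_right, hLw, ← hσ]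
    ring
  have e4 : ⟪L (z - y), z - y⟫ = ⟪L d, d⟫ - 2 * t * ⟪L d, w⟫ + t^2 * σ := by
    rw [hzy]
    simp only [map_sub, map_smul, inner_sub_left, inner_sub_right,
      real_inner_smul_left, real_inner_smul_right, hLw, hcr, ← hσ]
    ring
  have e5 : ⟪f' y, z - y⟫ = ⟪f' y, d⟫ - t * ⟪f' y, w⟫ := by
    rw [hzy]; simp only [inner_sub_right, real_inner_smul_right]
  have e6 : ⟪f' x, z - x⟫ = -(t * ⟪f' x, w⟫) := by
    rw [hzx]; simp only [inner_neg_right, real_inner_smul_right]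
  have e7 : t * σ = β * (t * ⟪L d, w⟫) + ε * (t * ⟪f' x, w⟫) - ε * (t * ⟪f' y, w⟫) := by
    rw [hσ, hu]
    simp only [inner_add_left, inner_sub_left, real_inner_smul_left]
    ring
  have h1 := H1 z y
  have h2 := H1 z x
  rw [abs_le] at h1 h2
  rw [e4, e5] at h1
  rw [e3, e6] at h2
  rcases hε with rfl | rfl <;>
    [(nlinarith [h1.1, h2.2, e7]); (nlinarith [h1.2, h2.1, e7])]

set_option maxHeartbeats 1000000 in
theorem stmt1 {n : ℕ} (f : EuclideanSpace ℝ (Fin n) → ℝ)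
    (f' : EuclideanSpace ℝ (Fin n) → EuclideanSpace ℝ (Fin n))
    (hf : ∀ x, HasGradientAt f (f' x) x)
    (L Linv : EuclideanSpace ℝ (Fin n) →L[ℝ] EuclideanSpace ℝ (Fin n))
    (hLsa : ∀ x y, ⟪L x, y⟫ = ⟪x, L y⟫)
    (hLpd : ∃ m > (0:ℝ), ∀ x, m * ‖x‖^2 ≤ ⟪L x, x⟫)
    (hLinv : ∀ x, Linv (L x) = x ∧ L (Linv x) = x)
    (β : ℝ) (hβ : 0 ≤ β) :
    (∀ x y, |f x - f y - ⟪f' y, x - y⟫| ≤ β/2 * ⟪L (x - y), x - y⟫) ↔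
    (∀ x y, ⟪Linv (f' x - f' y), f' x - f' y⟫ ≤ β^2 * ⟪L (x - y), x - y⟫) := by
  obtain ⟨m, hm, hmle⟩ := hLpd
  have hLnn : ∀ v, 0 ≤ ⟪L v, v⟫ := fun v => le_trans (by positivity) (hmle v)
  constructor
  · -- ⇒ direction
    intro H1 x y
    set d := x - y with hd
    set g := f' x - f' y with hg
    set u₁ := β • (L d) + (1:ℝ) • g with hu1
    set u₂ := β • (L d) + (-1:ℝ) • g with hu2
    set σ₁ := ⟪u₁, Linv u₁⟫ with hσ1
    set σ₂ := ⟪u₂, Linv u₂⟫ with hσ2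
    set D := ⟪L d, d⟫ with hD
    set q := f x - f y - ⟪f' y, d⟫ with hq
    -- σ nonneg
    have hσnn : ∀ v : EuclideanSpace ℝ (Fin n), 0 ≤ ⟪v, Linv v⟫ := by
      intro v
      have : ⟪v, Linv v⟫ = ⟪L (Linv v), Linv v⟫ := by rw [(hLinv v).2]
      rw [this]; exact hLnn _
    have hσ1nn : 0 ≤ σ₁ := hσnn u₁
    have hσ2nn : 0 ≤ σ₂ := hσnn u₂
    -- sum identity : σ₁ + σ₂ = 2 β² D + 2 ⟪g, Linv g⟫
    have hLid : Linv (L d) = d := (hLinv d).1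
    have hsum : σ₁ + σ₂ = 2 * β^2 * D + 2 * ⟪g, Linv g⟫ := by
      rw [hσ1, hσ2, hu1, hu2]
      simp only [map_add, map_smul, hLid, inner_add_left, inner_add_right,
        real_inner_smul_left, real_inner_smul_right, ← hD]
      ring
    -- goal in terms of s
    have hgoal : ⟪Linv g, g⟫ = ⟪g, Linv g⟫ := real_inner_comm _ _
    rw [hgoal]
    have hDnn : 0 ≤ D := hLnn d
    rcases eq_or_lt_of_le hβ with hβ0 | hβpos
    · -- β = 0
      subst hβ0
      have hq0 : q = 0 := by
        have h0 := H1 x y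
        rw [← hd, ← hq] at h0
        simp only [zero_div, zero_mul] at h0
        exact abs_eq_zero.mp (le_antisymm h0 (abs_nonneg _))
      have k1 := key_ineq f f' L Linv hLsa hLinv 0 H1 1 (Or.inl rfl) x y 1
      have k2 := key_ineq f f' L Linv hLsa hLinv 0 H1 (-1) (Or.inr rfl) x y 1
      rw [← hd, ← hg] at k1 k2
      rw [← hu1, ← hσ1] at k1
      rw [← hu2, ← hσ2] at k2
      rw [← hq] at k1 k2
      norm_num at k1 k2 hsum ⊢
      rw [hq0] at k1 k2
      norm_num at k1 k2
      linarith
    · -- β > 0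
      have k1 := key_ineq f f' L Linv hLsa hLinv β H1 1 (Or.inl rfl) x y (1/(2*β))
      have k2 := key_ineq f f' L Linv hLsa hLinv β H1 (-1) (Or.inr rfl) x y (1/(2*β))
      rw [← hd, ← hg, ← hu1, ← hσ1, ← hD, ← hq] at k1
      rw [← hd, ← hg, ← hu2, ← hσ2, ← hD, ← hq] at k2
      have hβne : β ≠ 0 := ne_of_gt hβpos
      have e1 : β * (1/(2*β))^2 * σ₁ = σ₁ / (4*β) := by field_simp; ring
      have e2 : β * (1/(2*β))^2 * σ₂ = σ₂ / (4*β) := by field_simp; ring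
      rw [e1] at k1; rw [e2] at k2
      have h4β : (0:ℝ) < 4*β := by linarith
      have k1' : σ₁ ≤ 2*β^2*D + 4*β*q := by
        have h := mul_le_mul_of_nonneg_left k1 (le_of_lt h4β)
        have ea : (4*β) * ((1/(2*β)) * σ₁) = 2*σ₁ := by field_simp; ring
        have eb : (4*β) * (σ₁/(4*β) + (β/2*D + 1*q)) = σ₁ + (2*β^2*D + 4*β*q) := by
          field_simp; ring
        rw [ea, eb] at h
        linarith
      have k2' : σ₂ ≤ 2*β^2*D - 4*β*q := by
        have h := mul_le_mul_of_nonneg_left k2 (le_of_lt h4β)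
        have ea : (4*β) * ((1/(2*β)) * σ₂) = 2*σ₂ := by field_simp; ring
        have eb : (4*β) * (σ₂/(4*β) + (β/2*D + -1*q)) = σ₂ + (2*β^2*D - 4*β*q) := by
          field_simp; ring
        rw [ea, eb] at h
        linarith
      linarith [k1', k2', hsum]
  · -- ⇐ direction
    intro H2 x y
    set d := x - y with hd
    set D := ⟪L d, d⟫ with hD
    have hDnn : 0 ≤ D := le_trans (by positivity) (hmle d)
    -- derivative along the segment
    have hline : ∀ t : ℝ, HasDerivAt (fun s : ℝ => f (y + s • d)) ⟪f' (y + t • d), d⟫ t := by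
      intro t
      have h1 : HasDerivAt (fun s : ℝ => y + s • d) d t := by
        simpa using ((hasDerivAt_id t).smul_const d).const_add y
      have h2 := (hf (y + t • d)).hasFDerivAt.comp_hasDerivAt t h1
      simpa [InnerProductSpace.toDual_apply_apply, Function.comp_def] using h2
    -- derivative bound
    have hbd : ∀ t : ℝ, 0 ≤ t → |⟪f' (y + t • d) - f' y, d⟫| ≤ β * t * D := by
      intro t ht
      set gt := f' (y + t • d) - f' y with hgt
      have ha : L (Linv gt) = gt := (hLinv gt).2
      have hcs := csL L hLsa ⟨m, hm, hmle⟩ (Linv gt) d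
      rw [ha] at hcs
      have h2 := H2 (y + t • d) y
      have hyd : (y + t • d) - y = t • d := by abel
      rw [hyd, ← hgt] at h2
      have h3 : ⟪L (t • d), t • d⟫ = t^2 * D := by
        simp only [map_smul, real_inner_smul_left, real_inner_smul_right, ← hD]
        ring
      rw [h3] at h2
      have h4 : ⟪gt, Linv gt⟫ = ⟪Linv gt, gt⟫ := real_inner_comm _ _
      have h5 : ⟪gt, d⟫^2 ≤ (β * t * D)^2 := by nlinarith [hcs, h2, hDnn]
      calc |⟪gt, d⟫| = Real.sqrt (⟪gt, d⟫^2) := (Real.sqrt_sq_eq_abs _).symm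
        _ ≤ Real.sqrt ((β * t * D)^2) := Real.sqrt_le_sqrt h5
        _ = β * t * D := Real.sqrt_sq (by positivity)
    -- monotone helper
    have mono : ∀ K K' : ℝ → ℝ, (∀ t, HasDerivAt K (K' t) t) →
        (∀ t, 0 ≤ t → t ≤ 1 → 0 ≤ K' t) → K 0 ≤ K 1 := by
      intro K K' hK hK'
      have := monotoneOn_of_hasDerivWithinAt_nonneg (f := K) (f' := K')
        (convex_Icc (0:ℝ) 1)
        (fun t _ => (hK t).continuousAt.continuousWithinAt)
        (fun t ht => (hK t).hasDerivWithinAt)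
        (fun t ht => by
          rw [interior_Icc] at ht
          exact hK' t (le_of_lt ht.1) (le_of_lt ht.2))
      exact this (Set.left_mem_Icc.mpr zero_le_one) (Set.right_mem_Icc.mpr zero_le_one)
        zero_le_one
    have hx1 : y + (1:ℝ) • d = x := by rw [hd]; simp
    have hx0 : y + (0:ℝ) • d = y := by simp
    -- upper bound
    have hup : f x - f y - ⟪f' y, d⟫ ≤ β/2 * D := by
      have h := mono (fun t => β/2*D*t^2 + t * ⟪f' y, d⟫ - f (y + t • d))
        (fun t => β*D*t + ⟪f' y, d⟫ - ⟪f' (y + t • d), d⟫)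
        (fun t => by
          have := ((((hasDerivAt_pow 2 t).const_mul (β/2*D)).add
            ((hasDerivAt_id t).mul_const ⟪f' y, d⟫)).sub (hline t))
          exact this.congr_deriv (by ring))
        (fun t ht0 ht1 => by
          have hb := hbd t ht0
          rw [abs_le] at hb
          have : ⟪f' (y + t • d), d⟫ - ⟪f' y, d⟫ = ⟪f' (y + t • d) - f' y, d⟫ := by
            rw [inner_sub_left]
          nlinarith [hb.2])
      simp only [hx0, hx1] at h
      linarith
    -- lower bound
    have hlo : -(β/2 * D) ≤ f x - f y - ⟪f' y, d⟫ := by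
      have h := mono (fun t => β/2*D*t^2 - t * ⟪f' y, d⟫ + f (y + t • d))
        (fun t => β*D*t - ⟪f' y, d⟫ + ⟪f' (y + t • d), d⟫)
        (fun t => by
          have := ((((hasDerivAt_pow 2 t).const_mul (β/2*D)).sub
            ((hasDerivAt_id t).mul_const ⟪f' y, d⟫)).add (hline t))
          exact this.congr_deriv (by ring))
        (fun t ht0 ht1 => by
          have hb := hbd t ht0
          rw [abs_le] at hb
          have : ⟪f' (y + t • d), d⟫ - ⟪f' y, d⟫ = ⟪f' (y + t • d) - f' y, d⟫ := by
            rw [inner_sub_left]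
          nlinarith [hb.1])
      simp only [hx0, hx1] at h
      linarith
    rw [abs_le]
    constructor <;> linarith
end

section
/- Let f: ℝⁿ → ℝ be differentiable and α ∈ (0,1]. Then ∇f is α-averaged (i.e., ∇f = (1-α)·Id + α·R for some nonexpansive operator R) if and only if -(2α-1)‖x-y‖² ≤ ⟨∇f(x) - ∇f(y), x-y⟩ ≤ ‖x-y‖² for all x, y ∈ ℝⁿ. -/
open scoped RealInnerProductSpace

variable {E : Type*} [NormedAddCommGroup E] [InnerProductSpace ℝ E] [CompleteSpace E]

lemma lineDeriv_aux (ψ : E → ℝ) (ψ' : E → E) (h : ∀ x, HasGradientAt ψ (ψ' x) x)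
    (x v : E) (t : ℝ) :
    HasDerivAt (fun s : ℝ => ψ (x + s • v)) ⟪ψ' (x + t • v), v⟫ t := by
  have hline : HasDerivAt (fun s : ℝ => x + s • v) v t := by
    simpa using ((hasDerivAt_id t).smul_const v).const_add x
  have := ((h (x + t • v)).hasFDerivAt).comp_hasDerivAt t hline
  simp [InnerProductSpace.toDual_apply_apply] at this
  exact this

lemma descent_aux (ψ : E → ℝ) (ψ' : E → E) (h : ∀ x, HasGradientAt ψ (ψ' x) x) (L : ℝ)
    (hL : ∀ x y, ⟪ψ' x - ψ' y, x - y⟫ ≤ L * ‖x - y‖ ^ 2) (x y : E) :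
    ψ y ≤ ψ x + ⟪ψ' x, y - x⟫ + L / 2 * ‖y - x‖ ^ 2 := by
  set v := y - x with hv
  set g : ℝ → ℝ := fun t => ψ (x + t • v) - t * ⟪ψ' x, v⟫ - t ^ 2 * (L / 2 * ‖v‖ ^ 2) with hg
  have hgd : ∀ t : ℝ, HasDerivAt g
      (⟪ψ' (x + t • v), v⟫ - ⟪ψ' x, v⟫ - (2 * t) * (L / 2 * ‖v‖ ^ 2)) t := by
    intro t
    have h1 := lineDeriv_aux ψ ψ' h x v t
    have h2 : HasDerivAt (fun t : ℝ => t * ⟪ψ' x, v⟫) ⟪ψ' x, v⟫ t := by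
      simpa using (hasDerivAt_id t).mul_const ⟪ψ' x, v⟫
    have h3 : HasDerivAt (fun t : ℝ => t ^ 2 * (L / 2 * ‖v‖ ^ 2))
        ((2 * t) * (L / 2 * ‖v‖ ^ 2)) t := by
      have h3' := (hasDerivAt_pow 2 t).mul_const (L / 2 * ‖v‖ ^ 2)
      norm_num at h3'
      convert h3' using 1
    exact (h1.sub h2).sub h3
  have hanti : AntitoneOn g (Set.Icc 0 1) := by
    apply antitoneOn_of_hasDerivWithinAt_nonpos (convex_Icc 0 1)
      (fun t _ => (hgd t).continuousAt.continuousWithinAt)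
      (fun t _ => (hgd t).hasDerivWithinAt)
    intro t ht
    rw [interior_Icc] at ht
    obtain ⟨ht0, _⟩ := ht
    have key := hL (x + t • v) x
    have hxt : (x + t • v) - x = t • v := by abel
    rw [hxt] at key
    have : ⟪ψ' (x + t • v) - ψ' x, t • v⟫ = t * ⟪ψ' (x + t • v) - ψ' x, v⟫ := by
      rw [real_inner_smul_right]
    rw [this, norm_smul] at key
    have hinner : ⟪ψ' (x + t • v) - ψ' x, v⟫ ≤ L * t * ‖v‖ ^ 2 := by
      rw [Real.norm_eq_abs, abs_of_pos ht0] at key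
      nlinarith [key]
    have hsub : ⟪ψ' (x + t • v) - ψ' x, v⟫ = ⟪ψ' (x + t • v), v⟫ - ⟪ψ' x, v⟫ :=
      inner_sub_left _ _ _
    nlinarith [hinner, hsub]
  have h01 := hanti (Set.left_mem_Icc.2 zero_le_one) (Set.right_mem_Icc.2 zero_le_one)
    zero_le_one
  simp only [hg] at h01
  norm_num at h01
  have hxy : x + v = y := by rw [hv]; abel
  rw [hxy] at h01
  linarith [h01]

lemma convex_lb_aux (ψ : E → ℝ) (ψ' : E → E) (h : ∀ x, HasGradientAt ψ (ψ' x) x)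
    (hmono : ∀ x y, 0 ≤ ⟪ψ' x - ψ' y, x - y⟫) (x y : E) :
    ψ x + ⟪ψ' x, y - x⟫ ≤ ψ y := by
  have hneg : ∀ z, HasGradientAt (fun w => -ψ w) (-ψ' z) z := by
    intro z
    have := (h z).hasFDerivAt.neg
    rw [hasGradientAt_iff_hasFDerivAt]
    convert this using 1
    · rfl
    · rfl
    · rfl
    exact map_neg (InnerProductSpace.toDual ℝ E) (ψ' z)
  have := descent_aux (fun w => -ψ w) (fun w => -ψ' w) hneg 0
    (fun a b => by
      have := hmono a b
      have hh : ⟪-ψ' a - -ψ' b, a - b⟫ = -⟪ψ' a - ψ' b, a - b⟫ := by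
        rw [show -ψ' a - -ψ' b = -(ψ' a - ψ' b) by abel, inner_neg_left]
      rw [hh]; nlinarith) x y
  simp only [inner_neg_left] at this
  linarith

lemma onesided_aux (ψ : E → ℝ) (ψ' : E → E) (h : ∀ x, HasGradientAt ψ (ψ' x) x) (L : ℝ)
    (hLpos : 0 < L) (hmono : ∀ x y, 0 ≤ ⟪ψ' x - ψ' y, x - y⟫)
    (hL : ∀ x y, ⟪ψ' x - ψ' y, x - y⟫ ≤ L * ‖x - y‖ ^ 2) (x y : E) :
    ψ x ≤ ψ y + ⟪ψ' x, x - y⟫ - 1 / (2 * L) * ‖ψ' y - ψ' x‖ ^ 2 := by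
  set d := ψ' y - ψ' x with hd
  set z := y - L⁻¹ • d with hz
  have hcvx := convex_lb_aux ψ ψ' h hmono x z
  have hdes := descent_aux ψ ψ' h L hL y z
  have hzy : z - y = -(L⁻¹) • d := by rw [hz]; module
  have hzx : z - x = (y - x) - L⁻¹ • d := by rw [hz]; abel
  have e1 : ⟪ψ' y, z - y⟫ = -(L⁻¹) * ⟪ψ' y, d⟫ := by rw [hzy, real_inner_smul_right]
  have e2 : ⟪ψ' x, z - x⟫ = ⟪ψ' x, y - x⟫ - L⁻¹ * ⟪ψ' x, d⟫ := by
    rw [hzx, inner_sub_right, real_inner_smul_right]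
  have e3 : ‖z - y‖ ^ 2 = L⁻¹ ^ 2 * ‖d‖ ^ 2 := by
    rw [hzy, norm_smul]
    simp [mul_pow, sq_abs]
  have e4 : ⟪ψ' y, d⟫ - ⟪ψ' x, d⟫ = ‖d‖ ^ 2 := by
    rw [← inner_sub_left, ← hd, real_inner_self_eq_norm_sq]
  have e5 : ⟪ψ' x, y - x⟫ = -⟪ψ' x, x - y⟫ := by
    rw [← inner_neg_right]; congr 1; abel
  have hLne : L ≠ 0 := ne_of_gt hLpos
  rw [e1, e3] at hdes
  rw [e2, e5] at hcvx
  have key : ψ x ≤ ψ y + ⟪ψ' x, x - y⟫ - L⁻¹ * (⟪ψ' y, d⟫ - ⟪ψ' x, d⟫)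
      + L / 2 * (L⁻¹ ^ 2 * ‖d‖ ^ 2) := by linarith
  rw [e4] at key
  have : L / 2 * (L⁻¹ ^ 2 * ‖d‖ ^ 2) = 1 / (2 * L) * ‖d‖ ^ 2 := by
    field_simp
  rw [this] at key
  have h2 : L⁻¹ * ‖d‖ ^ 2 = 2 * (1 / (2 * L) * ‖d‖ ^ 2) := by
    field_simp
  linarith [key, h2.ge]

lemma coco_aux (ψ : E → ℝ) (ψ' : E → E) (h : ∀ x, HasGradientAt ψ (ψ' x) x) (L : ℝ)
    (hLpos : 0 < L) (hmono : ∀ x y, 0 ≤ ⟪ψ' x - ψ' y, x - y⟫)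
    (hL : ∀ x y, ⟪ψ' x - ψ' y, x - y⟫ ≤ L * ‖x - y‖ ^ 2) (x y : E) :
    ‖ψ' x - ψ' y‖ ^ 2 ≤ L * ⟪ψ' x - ψ' y, x - y⟫ := by
  have h1 := onesided_aux ψ ψ' h L hLpos hmono hL x y
  have h2 := onesided_aux ψ ψ' h L hLpos hmono hL y x
  have e1 : ⟪ψ' y, y - x⟫ = -⟪ψ' y, x - y⟫ := by
    rw [← inner_neg_right]; congr 1; abel
  have e2 : ‖ψ' x - ψ' y‖ = ‖ψ' y - ψ' x‖ := norm_sub_rev _ _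
  have e3 : ⟪ψ' x, x - y⟫ - ⟪ψ' y, x - y⟫ = ⟪ψ' x - ψ' y, x - y⟫ := (inner_sub_left _ _ _).symm
  rw [e1] at h2
  rw [e2] at h2
  have hsum : L⁻¹ * ‖ψ' y - ψ' x‖ ^ 2 ≤ ⟪ψ' x - ψ' y, x - y⟫ := by
    have heq : L⁻¹ * ‖ψ' y - ψ' x‖ ^ 2 = 2 * (1 / (2 * L) * ‖ψ' y - ψ' x‖ ^ 2) := by
      field_simp
    linarith [h1, h2, e3.ge, e3.le, heq.le, heq.ge]
  rw [e2]
  have hid : ‖ψ' y - ψ' x‖ ^ 2 = L * (L⁻¹ * ‖ψ' y - ψ' x‖ ^ 2) := by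
    field_simp
  calc ‖ψ' y - ψ' x‖ ^ 2 = L * (L⁻¹ * ‖ψ' y - ψ' x‖ ^ 2) := hid
    _ ≤ L * ⟪ψ' x - ψ' y, x - y⟫ := mul_le_mul_of_nonneg_left hsum hLpos.le

lemma le_of_sq_le_sq_aux {a b : ℝ} (hb : 0 ≤ b) (h : a ^ 2 ≤ b ^ 2) (ha : 0 ≤ a) : a ≤ b := by
  nlinarith

/-- A mapping is nonexpansive if it is 1-Lipschitz. -/
def Nonexpansive {n : ℕ} (T : EuclideanSpace ℝ (Fin n) → EuclideanSpace ℝ (Fin n)) : Prop :=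
  ∀ x y, ‖T x - T y‖ ≤ ‖x - y‖

theorem stmt2 {n : ℕ} (f : EuclideanSpace ℝ (Fin n) → ℝ)
    (f' : EuclideanSpace ℝ (Fin n) → EuclideanSpace ℝ (Fin n))
    (hf : ∀ x, HasGradientAt f (f' x) x)
    (α : ℝ) (hα0 : 0 < α) (hα1 : α ≤ 1) :
    (∃ R, Nonexpansive R ∧ ∀ x, f' x = (1 - α) • x + α • R x) ↔
    (∀ x y, -(2*α - 1) * ‖x - y‖^2 ≤ ⟪f' x - f' y, x - y⟫ ∧
            ⟪f' x - f' y, x - y⟫ ≤ ‖x - y‖^2) := by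
  constructor
  · rintro ⟨R, hR, hRe⟩ x y
    have hdiff : f' x - f' y = (1 - α) • (x - y) + α • (R x - R y) := by
      rw [hRe x, hRe y]; module
    have hinner : ⟪f' x - f' y, x - y⟫
        = (1 - α) * ‖x - y‖ ^ 2 + α * ⟪R x - R y, x - y⟫ := by
      rw [hdiff, inner_add_left, real_inner_smul_left, real_inner_smul_left,
        real_inner_self_eq_norm_sq]
    have hcs : |⟪R x - R y, x - y⟫| ≤ ‖x - y‖ ^ 2 := by
      calc |⟪R x - R y, x - y⟫| ≤ ‖R x - R y‖ * ‖x - y‖ := abs_real_inner_le_norm _ _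
        _ ≤ ‖x - y‖ * ‖x - y‖ := by
            exact mul_le_mul_of_nonneg_right (hR x y) (norm_nonneg _)
        _ = ‖x - y‖ ^ 2 := (sq ‖x - y‖).symm
    have habs := abs_le.1 hcs
    constructor
    · rw [hinner]; nlinarith [habs.1, norm_nonneg (x - y)]
    · rw [hinner]; nlinarith [habs.2, norm_nonneg (x - y)]
  · intro hbd
    set ψ : EuclideanSpace ℝ (Fin n) → ℝ := fun w => (2:ℝ)⁻¹ * ‖w‖ ^ 2 - f w with hψ
    set ψ' : EuclideanSpace ℝ (Fin n) → EuclideanSpace ℝ (Fin n) := fun w => w - f' w with hψ'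
    have hgrad : ∀ z, HasGradientAt ψ (ψ' z) z := by
      intro z
      rw [hasGradientAt_iff_hasFDerivAt]
      have hsq : HasFDerivAt (fun w : EuclideanSpace ℝ (Fin n) => ‖w‖ ^ 2)
          (2 • (innerSL ℝ z)) z := (hasStrictFDerivAt_norm_sq z).hasFDerivAt
      have := (hsq.const_smul ((2:ℝ)⁻¹)).sub (hf z).hasFDerivAt
      convert this using 1
      · rfl
      · rfl
      · rfl
      ext w
      simp only [InnerProductSpace.toDual_apply_apply, ContinuousLinearMap.sub_apply,
        ContinuousLinearMap.coe_smul', Pi.smul_apply, 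
        innerSL_apply_apply, inner_sub_left]
      rw [hψ']
      simp only [inner_sub_left, smul_eq_mul]
      ring
    have hmono : ∀ x y, 0 ≤ ⟪ψ' x - ψ' y, x - y⟫ := by
      intro x y
      have h1 := (hbd x y).2
      have heq : ψ' x - ψ' y = (x - y) - (f' x - f' y) := by rw [hψ']; dsimp only; abel
      rw [heq, inner_sub_left, real_inner_self_eq_norm_sq]
      linarith
    have hLip : ∀ x y, ⟪ψ' x - ψ' y, x - y⟫ ≤ (2 * α) * ‖x - y‖ ^ 2 := by
      intro x y
      have h1 := (hbd x y).1
      have heq : ψ' x - ψ' y = (x - y) - (f' x - f' y) := by rw [hψ']; dsimp only; abel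
      rw [heq, inner_sub_left, real_inner_self_eq_norm_sq]
      nlinarith
    have hcoco := coco_aux ψ ψ' hgrad (2 * α) (by linarith) hmono hLip
    refine ⟨fun w => α⁻¹ • (f' w - (1 - α) • w), ?_, ?_⟩
    · intro x y
      set u := x - y with hu
      set d := f' x - f' y with hd
      have hkey : ‖d - (1 - α) • u‖ ^ 2 ≤ (α * ‖u‖) ^ 2 := by
        have hc := hcoco x y
        have heq : ψ' x - ψ' y = u - d := by rw [hψ', hu, hd]; dsimp only; abel
        rw [heq] at hc
        have e1 : ‖u - d‖ ^ 2 = ‖u‖ ^ 2 - 2 * ⟪u, d⟫ + ‖d‖ ^ 2 := norm_sub_sq_real u d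
        have e2 : ⟪u - d, u⟫ = ‖u‖ ^ 2 - ⟪d, u⟫ := by
          rw [inner_sub_left, real_inner_self_eq_norm_sq]
        have e3 : ‖d - (1 - α) • u‖ ^ 2
            = ‖d‖ ^ 2 - 2 * ((1 - α) * ⟪d, u⟫) + (1 - α) ^ 2 * ‖u‖ ^ 2 := by
          rw [norm_sub_sq_real, real_inner_smul_right, norm_smul]
          rw [Real.norm_eq_abs, abs_of_nonneg (by linarith : (0:ℝ) ≤ 1 - α)]
          ring
        have e4 : ⟪u, d⟫ = ⟪d, u⟫ := real_inner_comm d u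
        rw [e1, e2, e4] at hc
        rw [e3]
        nlinarith
      have hrw : α⁻¹ • (f' x - (1 - α) • x) - α⁻¹ • (f' y - (1 - α) • y)
          = α⁻¹ • (d - (1 - α) • u) := by rw [hd, hu]; module
      rw [hrw, norm_smul, Real.norm_eq_abs, abs_of_pos (inv_pos.2 hα0)]
      have h5 : ‖d - (1 - α) • u‖ ≤ α * ‖u‖ :=
        le_of_sq_le_sq_aux (by positivity) hkey (norm_nonneg _)
      calc α⁻¹ * ‖d - (1 - α) • u‖ ≤ α⁻¹ * (α * ‖u‖) :=
            mul_le_mul_of_nonneg_left h5 (inv_pos.2 hα0).le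
        _ = ‖u‖ := by field_simp
    · intro x
      have : α • (α⁻¹ • (f' x - (1 - α) • x)) = f' x - (1 - α) • x := by
        rw [smul_smul, mul_inv_cancel₀ (ne_of_gt hα0), one_smul]
      rw [this]; abel
end

section
/- Let f: ℝⁿ → ℝ be differentiable and β ∈ (0,1]. Then ∇f is β-negatively averaged (i.e., -∇f is β-averaged) if and only if -‖x-y‖² ≤ ⟨∇f(x) - ∇f(y), x-y⟩ ≤ (2β-1)‖x-y‖² for all x, y ∈ ℝⁿ. -/
open scoped RealInnerProductSpace

set_option maxHeartbeats 1000000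

section Aux

variable {n : ℕ}

local notation "E" => EuclideanSpace ℝ (Fin n)

lemma lineDerivAux (g : E → ℝ) (g' : E → E) (hg : ∀ x, HasGradientAt g (g' x) x)
    (a v : E) (t : ℝ) :
    HasDerivAt (fun s : ℝ => g (a + s • v)) ⟪g' (a + t • v), v⟫ t := by
  have h1 : HasDerivAt (fun s : ℝ => a + s • v) v t := by
    simpa using ((hasDerivAt_id t).smul_const v).const_add a
  have h2 := (hg (a + t • v)).hasFDerivAt.comp_hasDerivAt t h1
  simpa [InnerProductSpace.toDual_apply_apply, Function.comp_def] using h2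

/-- Subgradient inequality from monotone gradient. -/
lemma subgrad_ineq (g : E → ℝ) (g' : E → E) (hg : ∀ x, HasGradientAt g (g' x) x)
    (hmono : ∀ z w, 0 ≤ ⟪g' z - g' w, z - w⟫) (x z : E) :
    g x + ⟪g' x, z - x⟫ ≤ g z := by
  set v := z - x with hv
  set φ : ℝ → ℝ := fun t => g (x + t • v) - t * ⟪g' x, v⟫ with hφdef
  have hφ : ∀ t : ℝ, HasDerivAt φ (⟪g' (x + t • v), v⟫ - ⟪g' x, v⟫) t := fun t =>
    (lineDerivAux g g' hg x v t).sub (hasDerivAt_mul_const _)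
  have hmo : MonotoneOn φ (Set.Icc (0:ℝ) 1) := by
    apply monotoneOn_of_deriv_nonneg (convex_Icc 0 1)
    · exact fun t _ => (hφ t).continuousAt.continuousWithinAt
    · exact fun t _ => (hφ t).differentiableAt.differentiableWithinAt
    · intro t ht
      rw [interior_Icc] at ht
      rw [(hφ t).deriv]
      have := hmono (x + t • v) x
      simp only [add_sub_cancel_left] at this
      rw [real_inner_smul_right] at this
      have h1 : 0 ≤ t * ⟪g' (x + t • v) - g' x, v⟫ := this
      have h2 : 0 ≤ ⟪g' (x + t • v) - g' x, v⟫ := nonneg_of_mul_nonneg_right h1 ht.1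
      rw [inner_sub_left] at h2
      linarith
  have h01 := hmo (Set.mem_Icc.2 ⟨le_refl 0, zero_le_one⟩) (Set.mem_Icc.2 ⟨zero_le_one, le_refl 1⟩) zero_le_one
  simp only [hφdef, zero_smul, add_zero, zero_mul, sub_zero, one_smul, one_mul, hv,
    add_sub_cancel] at h01
  linarith

/-- Descent lemma from Lipschitz-type upper bound on the gradient. -/
lemma descent_ineq (g : E → ℝ) (g' : E → E) (hg : ∀ x, HasGradientAt g (g' x) x)
    (L : ℝ) (hup : ∀ z w, ⟪g' z - g' w, z - w⟫ ≤ L * ‖z - w‖^2) (z w : E) :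
    g w ≤ g z + ⟪g' z, w - z⟫ + L/2 * ‖w - z‖^2 := by
  set v := w - z with hv
  set ψ : ℝ → ℝ := fun t => g (z + t • v) - t * ⟪g' z, v⟫ - L/2 * ‖v‖^2 * t^2 with hψdef
  have hψ : ∀ t : ℝ, HasDerivAt ψ
      (⟪g' (z + t • v), v⟫ - ⟪g' z, v⟫ - L/2 * ‖v‖^2 * (2 * t)) t := by
    intro t
    have h1 := (lineDerivAux g g' hg z v t).sub (hasDerivAt_mul_const ⟪g' z, v⟫)
    have h2 := (hasDerivAt_pow 2 t).const_mul (L/2 * ‖v‖^2)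
    simpa [Pi.sub_def] using h1.sub h2
  have hmo : AntitoneOn ψ (Set.Icc (0:ℝ) 1) := by
    apply antitoneOn_of_deriv_nonpos (convex_Icc 0 1)
    · exact fun t _ => (hψ t).continuousAt.continuousWithinAt
    · exact fun t _ => (hψ t).differentiableAt.differentiableWithinAt
    · intro t ht
      rw [interior_Icc] at ht
      rw [(hψ t).deriv]
      have := hup (z + t • v) z
      simp only [add_sub_cancel_left] at this
      rw [real_inner_smul_right, norm_smul] at this
      have hb : t * ⟪g' (z + t • v) - g' z, v⟫ ≤ L * (|t| * ‖v‖)^2 := this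
      rw [abs_of_pos ht.1] at hb
      have h2 : ⟪g' (z + t • v) - g' z, v⟫ ≤ L * t * ‖v‖^2 := by
        have ht0 := ht.1
        nlinarith
      rw [inner_sub_left] at h2
      nlinarith
  have h01 := hmo (Set.mem_Icc.2 ⟨le_refl 0, zero_le_one⟩) (Set.mem_Icc.2 ⟨zero_le_one, le_refl 1⟩) zero_le_one
  simp only [hψdef, zero_smul, add_zero, zero_mul, sub_zero, one_smul, one_mul, one_pow, hv,
    add_sub_cancel] at h01
  linarith

/-- Baillon–Haddad: a monotone gradient with Lipschitz-type bound is cocoercive. -/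
lemma baillon_haddad (g : E → ℝ) (g' : E → E) (hg : ∀ x, HasGradientAt g (g' x) x)
    (L : ℝ) (hL : 0 < L)
    (hmono : ∀ z w, 0 ≤ ⟪g' z - g' w, z - w⟫)
    (hup : ∀ z w, ⟪g' z - g' w, z - w⟫ ≤ L * ‖z - w‖^2) (x y : E) :
    ‖g' x - g' y‖^2 ≤ L * ⟪g' x - g' y, x - y⟫ := by
  have key : ∀ a b : E, g a - ⟪g' a, a⟫ ≤ g b - ⟪g' a, b⟫ - 1/(2*L) * ‖g' b - g' a‖^2 := by
    intro a b
    set h : E → ℝ := fun z => g z - ⟪g' a, z⟫ with hhdef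
    set h' : E → E := fun z => g' z - g' a with hh'def
    have hh : ∀ z, HasGradientAt h (h' z) z := by
      intro z
      rw [hasGradientAt_iff_hasFDerivAt]
      have hlin : HasFDerivAt (fun w : E => ⟪g' a, w⟫)
          ((InnerProductSpace.toDual ℝ E) (g' a)) z :=
        ((InnerProductSpace.toDual ℝ E) (g' a)).hasFDerivAt
      have := (hg z).hasFDerivAt.sub hlin
      rw [← map_sub] at this
      exact this
    have hmono' : ∀ z w, 0 ≤ ⟪h' z - h' w, z - w⟫ := by
      intro z w; simpa [hh'def, sub_sub_sub_cancel_right] using hmono z w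
    have hup' : ∀ z w, ⟪h' z - h' w, z - w⟫ ≤ L * ‖z - w‖^2 := by
      intro z w; simpa [hh'def, sub_sub_sub_cancel_right] using hup z w
    set d := g' b - g' a with hd
    set w : E := b - (L⁻¹) • d with hw
    have h1 : h a + ⟪h' a, w - a⟫ ≤ h w := subgrad_ineq h h' hh hmono' a w
    have h2 : h w ≤ h b + ⟪h' b, w - b⟫ + L/2 * ‖w - b‖^2 := descent_ineq h h' hh L hup' b w
    have ha0 : h' a = 0 := by simp [hh'def]
    rw [ha0] at h1
    simp only [inner_zero_left, add_zero] at h1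
    have hwb : w - b = -(L⁻¹ • d) := by rw [hw]; abel
    have h3 : ⟪h' b, w - b⟫ = -(L⁻¹ * ‖d‖^2) := by
      rw [hwb, inner_neg_right, real_inner_smul_right]
      have : ⟪h' b, d⟫ = ‖d‖^2 := by
        rw [hh'def]
        simp only [hd]
        rw [real_inner_self_eq_norm_sq]
      rw [this]
    have h4 : ‖w - b‖^2 = L⁻¹^2 * ‖d‖^2 := by
      rw [hwb, norm_neg, norm_smul, mul_pow]
      congr 1
      rw [Real.norm_eq_abs, sq_abs]
    rw [h3, h4] at h2
    have hcomb := le_trans h1 h2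
    have hLL : L ≠ 0 := hL.ne'
    have : h a ≤ h b - 1/(2*L) * ‖d‖^2 := by
      have e1 : h b + -(L⁻¹ * ‖d‖ ^ 2) + L / 2 * (L⁻¹ ^ 2 * ‖d‖ ^ 2)
          = h b - 1/(2*L) * ‖d‖^2 := by field_simp; ring
      linarith [e1 ▸ hcomb]
    simpa [hhdef] using this
  have k1 := key x y
  have k2 := key y x
  have hn : ‖g' x - g' y‖ = ‖g' y - g' x‖ := by rw [norm_sub_rev]
  rw [← hn] at k1
  have hexp : ⟪g' x - g' y, x - y⟫
      = ⟪g' x, x⟫ - ⟪g' x, y⟫ - ⟪g' y, x⟫ + ⟪g' y, y⟫ := by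
    rw [inner_sub_left, inner_sub_right, inner_sub_right]; ring
  have hL2 : 0 < 1/(2*L) := by positivity
  have hfin : (2 : ℝ) * (1/(2*L)) * ‖g' x - g' y‖^2 ≤ ⟪g' x - g' y, x - y⟫ := by
    rw [hexp]; linarith
  have : (2 : ℝ) * (1/(2*L)) = L⁻¹ := by field_simp
  rw [this] at hfin
  rw [← mul_le_mul_iff_right₀ (show (0:ℝ) < L⁻¹ by positivity)]
  calc L⁻¹ * ‖g' x - g' y‖^2 ≤ ⟪g' x - g' y, x - y⟫ := by linarith
    _ = L⁻¹ * (L * ⟪g' x - g' y, x - y⟫) := by field_simp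

end Aux

theorem stmt3 {n : ℕ} (f : EuclideanSpace ℝ (Fin n) → ℝ)
    (f' : EuclideanSpace ℝ (Fin n) → EuclideanSpace ℝ (Fin n))
    (hf : ∀ x, HasGradientAt f (f' x) x)
    (β : ℝ) (hβ0 : 0 < β) (hβ1 : β ≤ 1) :
    (∃ R, Nonexpansive R ∧ ∀ x, -f' x = (1 - β) • x + β • R x) ↔
    (∀ x y, -‖x - y‖^2 ≤ ⟪f' x - f' y, x - y⟫ ∧
            ⟪f' x - f' y, x - y⟫ ≤ (2*β - 1) * ‖x - y‖^2) := by
  constructor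
  · rintro ⟨R, hR, hid⟩ x y
    set u := x - y with hu
    set d := f' x - f' y with hd
    set t := ⟪d, u⟫ with ht
    set s := ‖u‖^2 with hs
    have hβR : β • (R x - R y) = -(d + (1 - β) • u) := by
      have e1 := hid x
      have e2 := hid y
      have : β • R x - β • R y = (-f' x - (1-β) • x) - (-f' y - (1-β) • y) := by
        rw [eq_sub_of_add_eq' e1.symm, eq_sub_of_add_eq' e2.symm]
      rw [smul_sub, this, hd, hu, smul_sub]
      abel
    have hnorm : ‖d + (1 - β) • u‖ ≤ β * ‖u‖ := by
      have := hR x y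
      have h2 : β * ‖R x - R y‖ ≤ β * ‖u‖ := mul_le_mul_of_nonneg_left this hβ0.le
      calc ‖d + (1 - β) • u‖ = ‖β • (R x - R y)‖ := by rw [hβR, norm_neg]
        _ = β * ‖R x - R y‖ := by rw [norm_smul, Real.norm_eq_abs, abs_of_pos hβ0]
        _ ≤ β * ‖u‖ := h2
    have hsq : ‖d‖^2 + 2*(1-β)*t + (1-β)^2 * s ≤ β^2 * s := by
      have h1 : ‖d + (1 - β) • u‖^2 ≤ (β * ‖u‖)^2 := by
        apply pow_le_pow_left₀ (norm_nonneg _) hnorm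
      rw [norm_add_sq_real, real_inner_smul_right, norm_smul, Real.norm_eq_abs, mul_pow,
        sq_abs] at h1
      rw [hs]
      nlinarith [h1]
    have hCS : t^2 ≤ ‖d‖^2 * s := by
      have := real_inner_mul_inner_self_le d u
      rw [real_inner_self_eq_norm_sq, real_inner_self_eq_norm_sq] at this
      calc t^2 = ⟪d,u⟫ * ⟪d,u⟫ := by rw [ht]; ring
        _ ≤ ‖d‖^2 * s := by rw [hs]; nlinarith [this]
    have hs0 : 0 ≤ s := by rw [hs]; positivity
    have hd0 : 0 ≤ ‖d‖^2 := by positivity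
    have hAB : 0 ≤ (t + s) * ((2*β-1)*s - t) := by
      nlinarith [mul_le_mul_of_nonneg_right hsq hs0, hCS]
    have h2bs : 0 ≤ 2*β*s := by positivity
    constructor
    · show -s ≤ t
      by_contra hcon
      push_neg at hcon
      have hA : t + s < 0 := by linarith
      have hB : 0 < (2*β-1)*s - t := by linarith
      nlinarith [mul_pos (show (0:ℝ) < -(t+s) by linarith) hB]
    · show t ≤ (2*β - 1) * s
      by_contra hcon
      push_neg at hcon
      have hB : (2*β-1)*s - t < 0 := by linarith
      have hA : 0 < t + s := by linarith
      nlinarith [mul_pos hA (show (0:ℝ) < -((2*β-1)*s - t) by linarith)]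
  · intro h
    -- Baillon–Haddad setup: g = f + ‖·‖²/2 has monotone gradient with constant 2β
    set g : EuclideanSpace ℝ (Fin n) → ℝ := fun z => f z + (1/2) * ‖z‖^2 with hgdef
    set g' : EuclideanSpace ℝ (Fin n) → EuclideanSpace ℝ (Fin n) := fun z => f' z + z with hg'def
    have hnormsq : ∀ z : EuclideanSpace ℝ (Fin n), HasFDerivAt (fun w : EuclideanSpace ℝ (Fin n) => (1/2 : ℝ) * ‖w‖^2)
        ((InnerProductSpace.toDual ℝ (EuclideanSpace ℝ (Fin n))) z) z := by
      intro z
      have h1 := ((hasStrictFDerivAt_norm_sq z).hasFDerivAt).const_smul (1/2 : ℝ)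
      have heq : ((1/2 : ℝ) • (2 • (innerSL ℝ z)) : EuclideanSpace ℝ (Fin n) →L[ℝ] ℝ)
          = (InnerProductSpace.toDual ℝ (EuclideanSpace ℝ (Fin n))) z := by
        ext w
        simp [InnerProductSpace.toDual_apply_apply]
      rw [heq] at h1
      simpa [smul_eq_mul, Pi.smul_def] using h1
    have hg : ∀ z, HasGradientAt g (g' z) z := by
      intro z
      rw [hasGradientAt_iff_hasFDerivAt]
      have := (hf z).hasFDerivAt.add (hnormsq z)
      rw [← map_add] at this
      exact this
    have hmono : ∀ z w, 0 ≤ ⟪g' z - g' w, z - w⟫ := by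
      intro z w
      have hzw := (h z w).1
      have : g' z - g' w = (f' z - f' w) + (z - w) := by simp only [hg'def]; abel
      rw [this, inner_add_left, real_inner_self_eq_norm_sq]
      linarith
    have hup : ∀ z w, ⟪g' z - g' w, z - w⟫ ≤ (2*β) * ‖z - w‖^2 := by
      intro z w
      have hzw := (h z w).2
      have : g' z - g' w = (f' z - f' w) + (z - w) := by simp only [hg'def]; abel
      rw [this, inner_add_left, real_inner_self_eq_norm_sq]
      nlinarith [hzw]
    have hcoco := baillon_haddad g g' hg (2*β) (by positivity) hmono hup
    refine ⟨fun x => β⁻¹ • (-f' x - (1-β) • x), ?_, ?_⟩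
    · intro x y
      set u := x - y with hu
      set d := f' x - f' y with hd
      set t := ⟪d, u⟫ with ht
      set s := ‖u‖^2 with hs
      have hcc := hcoco x y
      have hgxy : g' x - g' y = d + u := by simp only [hg'def, hd, hu]; abel
      rw [hgxy, norm_add_sq_real, inner_add_left, real_inner_self_eq_norm_sq] at hcc
      -- hcc : ‖d‖² + 2t + s ≤ 2β (t + s)
      have hkey : ‖d‖^2 + 2*(1-β)*t + (1-β)^2 * s ≤ β^2 * s := by
        rw [hs]
        nlinarith [hcc]
      have hdiff : β⁻¹ • (-f' x - (1-β) • x) - β⁻¹ • (-f' y - (1-β) • y)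
          = β⁻¹ • (-(d + (1-β) • u)) := by
        rw [← smul_sub]
        congr 1
        rw [hd, hu, smul_sub]
        abel
      rw [hdiff, norm_smul, norm_neg, Real.norm_eq_abs, abs_of_pos (by positivity : (0:ℝ) < β⁻¹)]
      have hns : ‖d + (1-β) • u‖ ≤ β * ‖u‖ := by
        have hexp : ‖d + (1-β) • u‖^2 ≤ (β * ‖u‖)^2 := by
          rw [norm_add_sq_real, real_inner_smul_right, norm_smul, Real.norm_eq_abs, mul_pow,
            sq_abs]
          rw [← ht] ; rw [hs] at hkey
          nlinarith [hkey]
        nlinarith [norm_nonneg (d + (1-β) • u), mul_nonneg hβ0.le (norm_nonneg u), hexp]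
      calc β⁻¹ * ‖d + (1-β) • u‖ ≤ β⁻¹ * (β * ‖u‖) :=
            mul_le_mul_of_nonneg_left hns (by positivity)
        _ = ‖u‖ := by field_simp
    · intro x
      rw [smul_inv_smul₀ hβ0.ne']
      abel
end

section
/- Let f: ℝⁿ → ℝ be differentiable with ∇f the gradient of f, and δ ∈ [0,1]. Then ∇f is δ-Lipschitz continuous if and only if ∇f is both ((δ+1)/2)-averaged and ((δ+1)/2)-negatively averaged. -/
set_option maxHeartbeats 1000000


open scoped RealInnerProductSpace

/-- `T` is `α`-averaged: `T = (1-α)Id + αS` for some nonexpansive `S`. -/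
def Averaged {n : ℕ} (T : EuclideanSpace ℝ (Fin n) → EuclideanSpace ℝ (Fin n)) (α : ℝ) : Prop :=
  ∃ S, Nonexpansive S ∧ ∀ x, T x = (1 - α) • x + α • S x

section aux

variable {n : ℕ}

local notation "E" => EuclideanSpace ℝ (Fin n)

lemma le_of_sq_le_sq' {a b : ℝ} (ha : 0 ≤ a) (hb : 0 ≤ b) (h : a ^ 2 ≤ b ^ 2) : a ≤ b := by
  nlinarith

/-- Directional derivative along a line from a gradient. -/
lemma dirDeriv {f : E → ℝ} {f' : E → E} (hf : ∀ x, HasGradientAt f (f' x) x)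
    (u w : E) (t : ℝ) :
    HasDerivAt (fun s : ℝ => f (u + s • w)) ⟪f' (u + t • w), w⟫ t := by
  have hline : HasDerivAt (fun s : ℝ => u + s • w) w t := by
    simpa using ((hasDerivAt_id t).smul_const w).const_add u
  have := ((hf (u + t • w)).hasFDerivAt).comp_hasDerivAt t hline
  exact this

/-- Convexity inequality from monotone gradient. -/
lemma lower_bd {h : E → ℝ} {h' : E → E}
    (dd : ∀ u w : E, ∀ t : ℝ, HasDerivAt (fun s : ℝ => h (u + s • w)) ⟪h' (u + t • w), w⟫ t)
    (mono : ∀ a b : E, 0 ≤ ⟪h' a - h' b, a - b⟫) (u v : E) :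
    h u + ⟪h' u, v - u⟫ ≤ h v := by
  set w := v - u with hw
  obtain ⟨ξ, hξ, hslope⟩ := exists_hasDerivAt_eq_slope (fun s : ℝ => h (u + s • w))
    (fun s => ⟪h' (u + s • w), w⟫) one_pos
    (fun s _ => (dd u w s).continuousAt.continuousWithinAt) (fun s _ => dd u w s)
  have h0 : u + (0 : ℝ) • w = u := by simp
  have h1 : u + (1 : ℝ) • w = v := by simp [hw]
  rw [h0, h1] at hslope
  simp only [sub_zero, div_one] at hslope
  -- monotonicity: inner (h'(u+ξw) - h' u) w ≥ 0
  have hm := mono (u + ξ • w) u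
  have hsub : (u + ξ • w) - u = ξ • w := by abel
  rw [hsub, real_inner_smul_right] at hm
  have hξ0 : 0 < ξ := hξ.1
  have hkey : ⟪h' u, w⟫ ≤ ⟪h' (u + ξ • w), w⟫ := by
    have : 0 ≤ ⟪h' (u + ξ • w) - h' u, w⟫ := nonneg_of_mul_nonneg_right hm hξ0
    rw [inner_sub_left] at this; linarith
  linarith [hslope ▸ hkey]

/-- Descent lemma from one-sided Lipschitz-type bound on the gradient. -/
lemma upper_bd {h : E → ℝ} {h' : E → E} {L : ℝ}
    (dd : ∀ u w : E, ∀ t : ℝ, HasDerivAt (fun s : ℝ => h (u + s • w)) ⟪h' (u + t • w), w⟫ t)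
    (smooth : ∀ a b : E, ⟪h' a - h' b, a - b⟫ ≤ L * ‖a - b‖ ^ 2) (u v : E) :
    h v ≤ h u + ⟪h' u, v - u⟫ + L / 2 * ‖v - u‖ ^ 2 := by
  set w := v - u with hw
  set χ : ℝ → ℝ := fun t => h (u + t • w) - t * ⟪h' u, w⟫ - L / 2 * t ^ 2 * ‖w‖ ^ 2 with hχ
  have dχ : ∀ t : ℝ, HasDerivAt χ (⟪h' (u + t • w), w⟫ - ⟪h' u, w⟫ - L * t * ‖w‖ ^ 2) t := by
    intro t
    have h1 := dd u w t
    have h2 : HasDerivAt (fun t : ℝ => t * ⟪h' u, w⟫) ⟪h' u, w⟫ t := by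
      simpa using (hasDerivAt_id t).mul_const ⟪h' u, w⟫
    have h3 : HasDerivAt (fun t : ℝ => L / 2 * t ^ 2 * ‖w‖ ^ 2) (L * t * ‖w‖ ^ 2) t := by
      have : HasDerivAt (fun t : ℝ => t ^ 2) (2 * t) t := by
        simpa using hasDerivAt_pow 2 t
      have := (this.const_mul (L / 2)).mul_const (‖w‖ ^ 2)
      exact this.congr_deriv (by ring)
    exact (h1.sub h2).sub h3
  obtain ⟨ξ, hξ, hslope⟩ := exists_hasDerivAt_eq_slope χ
    (fun t => ⟪h' (u + t • w), w⟫ - ⟪h' u, w⟫ - L * t * ‖w‖ ^ 2) one_pos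
    (fun s _ => (dχ s).continuousAt.continuousWithinAt) (fun s _ => dχ s)
  have hξ0 : 0 < ξ := hξ.1
  have hsm := smooth (u + ξ • w) u
  have hsub : (u + ξ • w) - u = ξ • w := by abel
  rw [hsub, real_inner_smul_right] at hsm
  have hns : ‖ξ • w‖ ^ 2 = ξ ^ 2 * ‖w‖ ^ 2 := by
    rw [norm_smul, Real.norm_eq_abs, mul_pow, sq_abs]
  rw [hns, inner_sub_left] at hsm
  have hstep : ⟪h' (u + ξ • w), w⟫ - ⟪h' u, w⟫ ≤ L * ξ * ‖w‖ ^ 2 := by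
    have h2 : ξ * (⟪h' (u + ξ • w), w⟫ - ⟪h' u, w⟫) ≤ ξ * (L * ξ * ‖w‖ ^ 2) := by
      calc ξ * (⟪h' (u + ξ • w), w⟫ - ⟪h' u, w⟫) ≤ L * (ξ ^ 2 * ‖w‖ ^ 2) := hsm
        _ = ξ * (L * ξ * ‖w‖ ^ 2) := by ring
    exact le_of_mul_le_mul_left h2 hξ0
  have hχ10 : χ 1 - χ 0 ≤ 0 := by
    have hd : (χ 1 - χ 0) / (1 - 0) ≤ 0 := hslope ▸ (by linarith [hstep])
    rw [show (1:ℝ) - 0 = 1 by norm_num, div_one] at hd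
    exact hd
  have h0 : u + (0 : ℝ) • w = u := by simp
  have h1 : u + (1 : ℝ) • w = v := by simp [hw]
  have e1 : χ 1 = h v - ⟪h' u, w⟫ - L / 2 * ‖w‖ ^ 2 := by
    show h (u + (1:ℝ) • w) - 1 * ⟪h' u, w⟫ - L / 2 * 1 ^ 2 * ‖w‖ ^ 2 = _
    rw [h1]; ring
  have e0 : χ 0 = h u := by
    show h (u + (0:ℝ) • w) - 0 * ⟪h' u, w⟫ - L / 2 * 0 ^ 2 * ‖w‖ ^ 2 = _
    rw [h0]; ring
  rw [e1, e0] at hχ10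
  linarith

/-- Cocoercivity from convexity + smoothness. -/
lemma cocoercive {h : E → ℝ} {h' : E → E} {L : ℝ} (hL : 0 < L)
    (conv : ∀ u v : E, h u + ⟪h' u, v - u⟫ ≤ h v)
    (desc : ∀ u v : E, h v ≤ h u + ⟪h' u, v - u⟫ + L / 2 * ‖v - u‖ ^ 2) (x y : E) :
    ‖h' x - h' y‖ ^ 2 ≤ L * ⟪h' x - h' y, x - y⟫ := by
  have key : ∀ a b : E, h a + ⟪h' a, b - a⟫ + 1 / (2 * L) * ‖h' b - h' a‖ ^ 2 ≤ h b := by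
    intro a b
    set e := h' b - h' a with he
    set z := b - (1 / L) • e with hz
    have h1 := conv a z
    have h2 := desc b z
    have hzb : z - b = -((1 / L) • e) := by rw [hz]; abel
    have hza : z - a = (b - a) - (1 / L) • e := by rw [hz]; abel
    rw [hzb] at h2
    rw [hza] at h1
    rw [inner_sub_right, real_inner_smul_right] at h1
    rw [inner_neg_right, real_inner_smul_right, norm_neg, norm_smul] at h2
    have hee : ⟪h' b, e⟫ - ⟪h' a, e⟫ = ‖e‖ ^ 2 := by
      rw [← inner_sub_left, ← he, real_inner_self_eq_norm_sq]
    have hnorm : (L / 2) * (‖(1 / L : ℝ)‖ * ‖e‖) ^ 2 = 1 / (2 * L) * ‖e‖ ^ 2 := by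
      rw [Real.norm_eq_abs, abs_of_pos (by positivity : (0:ℝ) < 1 / L)]
      field_simp
    rw [hnorm] at h2
    have hL0 : L ≠ 0 := ne_of_gt hL
    have f1 : 1 / L * ⟪h' b, e⟫ - 1 / L * ⟪h' a, e⟫ = 1 / L * ‖e‖ ^ 2 := by
      rw [← mul_sub, hee]
    have f2 : 1 / L * ‖e‖ ^ 2 = 2 * (1 / (2 * L) * ‖e‖ ^ 2) := by
      field_simp
    linarith [h1, h2, f1, f2]
  have k1 := key x y
  have k2 := key y x
  have hsym : ⟪h' x, y - x⟫ + ⟪h' y, x - y⟫ = -⟪h' x - h' y, x - y⟫ := by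
    rw [inner_sub_left]
    have hyx : (y : E) - x = -(x - y) := by abel
    rw [hyx, inner_neg_right]
    ring
  have hnn : ‖h' y - h' x‖ = ‖h' x - h' y‖ := norm_sub_rev _ _
  rw [hnn] at k1
  have hL0 : L ≠ 0 := ne_of_gt hL
  have h3 : 1 / L * ‖h' x - h' y‖ ^ 2 ≤ ⟪h' x - h' y, x - y⟫ := by
    have f2 : 1 / L * ‖h' x - h' y‖ ^ 2
        = 1 / (2 * L) * ‖h' x - h' y‖ ^ 2 + 1 / (2 * L) * ‖h' x - h' y‖ ^ 2 := by
      field_simp; ring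
    linarith [k1, k2, hsym, f2]
  have h4 := mul_le_mul_of_nonneg_left h3 (le_of_lt hL)
  have h5 : L * (1 / L * ‖h' x - h' y‖ ^ 2) = ‖h' x - h' y‖ ^ 2 := by
    field_simp
  linarith [h4, h5]

end aux

theorem stmt4 {n : ℕ} (f : EuclideanSpace ℝ (Fin n) → ℝ)
    (f' : EuclideanSpace ℝ (Fin n) → EuclideanSpace ℝ (Fin n))
    (hf : ∀ x, HasGradientAt f (f' x) x)
    (δ : ℝ) (hδ0 : 0 ≤ δ) (hδ1 : δ ≤ 1) :
    (∀ x y, ‖f' x - f' y‖ ≤ δ * ‖x - y‖) ↔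
    (Averaged f' ((δ + 1)/2) ∧ Averaged (fun x => -f' x) ((δ + 1)/2)) := by
  set α : ℝ := (δ + 1) / 2 with hα
  have hα0 : 0 < α := by rw [hα]; linarith
  have hc : 1 - α = (1 - δ) / 2 := by rw [hα]; ring
  constructor
  · -- forward
    intro hLip
    have main : ∀ T : EuclideanSpace ℝ (Fin n) → EuclideanSpace ℝ (Fin n),
        (∀ x y, ‖T x - T y‖ ≤ δ * ‖x - y‖) → Averaged T α := by
      intro T hT
      refine ⟨fun x => α⁻¹ • (T x - (1 - α) • x), ?_, ?_⟩
      · intro x y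
        have hdiff : α⁻¹ • (T x - (1 - α) • x) - α⁻¹ • (T y - (1 - α) • y)
            = α⁻¹ • ((T x - T y) - (1 - α) • (x - y)) := by
          rw [← smul_sub]; congr 1
          rw [smul_sub]; abel
        rw [hdiff, norm_smul, Real.norm_eq_abs, abs_of_pos (by positivity)]
        rw [inv_mul_le_iff₀ hα0]
        -- need ‖(Tx - Ty) - (1-α)•(x-y)‖ ≤ α * ‖x - y‖
        have hg := hT x y
        have hip := abs_real_inner_le_norm (T x - T y) (x - y)
        have hsq : ‖(T x - T y) - (1 - α) • (x - y)‖ ^ 2 ≤ (α * ‖x - y‖) ^ 2 := by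
          rw [norm_sub_sq_real, real_inner_smul_right, norm_smul, Real.norm_eq_abs,
            abs_of_nonneg (by rw [hc]; linarith : (0:ℝ) ≤ 1 - α)]
          have h1 : ‖T x - T y‖ ^ 2 ≤ (δ * ‖x - y‖) ^ 2 := by
            have := norm_nonneg (T x - T y)
            nlinarith [hg]
          have h2 : -⟪T x - T y, x - y⟫ ≤ δ * ‖x - y‖ ^ 2 := by
            have := abs_le.mp hip
            nlinarith [hg, norm_nonneg (x - y), norm_nonneg (T x - T y)]
          rw [hc, hα]
          nlinarith [norm_nonneg (x - y)]
        exact le_of_sq_le_sq' (norm_nonneg _) (by positivity) hsq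
      · intro x
        rw [smul_inv_smul₀ (ne_of_gt hα0)]
        abel
    exact ⟨main f' hLip, main (fun x => -f' x) (by
      intro x y
      have : (-f' x) - (-f' y) = -(f' x - f' y) := by abel
      rw [this, norm_neg]; exact hLip x y)⟩
  · -- reverse
    rintro ⟨⟨S, hS, hSrep⟩, ⟨R, hR, hRrep⟩⟩
    -- pointwise squared inequalities
    have I1 : ∀ x y, ‖f' x - f' y‖ ^ 2 - 2 * ((1 - δ)/2) * ⟪f' x - f' y, x - y⟫
        ≤ δ * ‖x - y‖ ^ 2 := by
      intro x y
      have hrep : f' x - f' y = (1 - α) • (x - y) + α • (S x - S y) := by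
        rw [hSrep x, hSrep y, smul_sub, smul_sub]; abel
      have hnorm : ‖(f' x - f' y) - (1 - α) • (x - y)‖ ≤ α * ‖x - y‖ := by
        have : (f' x - f' y) - (1 - α) • (x - y) = α • (S x - S y) := by
          rw [hrep]; abel
        rw [this, norm_smul, Real.norm_eq_abs, abs_of_pos hα0]
        exact mul_le_mul_of_nonneg_left (hS x y) (le_of_lt hα0)
      have hsq : ‖(f' x - f' y) - (1 - α) • (x - y)‖ ^ 2 ≤ (α * ‖x - y‖) ^ 2 := by
        have h0 := norm_nonneg ((f' x - f' y) - (1 - α) • (x - y))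
        nlinarith [hnorm]
      rw [norm_sub_sq_real, real_inner_smul_right, norm_smul, Real.norm_eq_abs,
        abs_of_nonneg (by rw [hc]; linarith : (0:ℝ) ≤ 1 - α)] at hsq
      rw [hc] at hsq
      rw [hα] at hsq
      nlinarith [hsq, norm_nonneg (x - y)]
    have I2 : ∀ x y, ‖f' x - f' y‖ ^ 2 + 2 * ((1 - δ)/2) * ⟪f' x - f' y, x - y⟫
        ≤ δ * ‖x - y‖ ^ 2 := by
      intro x y
      have hrep : -(f' x - f' y) = (1 - α) • (x - y) + α • (R x - R y) := by
        have hx := hRrep x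
        have hy := hRrep y
        simp only at hx hy
        have : -(f' x - f' y) = (-f' x) - (-f' y) := by abel
        rw [this, hx, hy, smul_sub, smul_sub]; abel
      have hnorm : ‖(-(f' x - f' y)) - (1 - α) • (x - y)‖ ≤ α * ‖x - y‖ := by
        have : (-(f' x - f' y)) - (1 - α) • (x - y) = α • (R x - R y) := by
          rw [hrep]; abel
        rw [this, norm_smul, Real.norm_eq_abs, abs_of_pos hα0]
        exact mul_le_mul_of_nonneg_left (hR x y) (le_of_lt hα0)
      have hsq : ‖(-(f' x - f' y)) - (1 - α) • (x - y)‖ ^ 2 ≤ (α * ‖x - y‖) ^ 2 := by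
        have h0 := norm_nonneg ((-(f' x - f' y)) - (1 - α) • (x - y))
        nlinarith [hnorm]
      rw [norm_sub_sq_real, real_inner_smul_right, norm_neg, inner_neg_left, norm_smul,
        Real.norm_eq_abs, abs_of_nonneg (by rw [hc]; linarith : (0:ℝ) ≤ 1 - α)] at hsq
      rw [hc] at hsq
      rw [hα] at hsq
      nlinarith [hsq, norm_nonneg (x - y)]
    -- hypomonotonicity: |⟪f'x - f'y, x - y⟫| ≤ δ‖x-y‖²
    have M : ∀ x y, |⟪f' x - f' y, x - y⟫| ≤ δ * ‖x - y‖ ^ 2 := by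
      intro x y
      have h1 := I1 x y
      have h2 := I2 x y
      have hip := abs_real_inner_le_norm (f' x - f' y) (x - y)
      set p := ⟪f' x - f' y, x - y⟫
      set G := ‖f' x - f' y‖
      set D := ‖x - y‖
      have hG : 0 ≤ G := norm_nonneg _
      have hD : 0 ≤ D := norm_nonneg _
      clear_value p G D
      have habs : |p| ≤ G * D := hip
      have hG2 : G ^ 2 + 2 * ((1 - δ)/2) * |p| ≤ δ * D ^ 2 := by
        rcases abs_cases p with ⟨he, _⟩ | ⟨he, _⟩ <;> rw [he] <;> linarith
      have hp2 : |p| ^ 2 ≤ G ^ 2 * D ^ 2 := by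
        nlinarith [habs, abs_nonneg p]
      have m1 := mul_le_mul_of_nonneg_right hG2 (sq_nonneg D)
      have key : (|p| - δ * D ^ 2) * (|p| + D ^ 2) ≤ 0 := by nlinarith [hp2, m1]
      by_contra hcon
      push_neg at hcon
      have hq0 : 0 < |p| := lt_of_le_of_lt (by positivity) hcon
      have hsum : 0 < |p| + D ^ 2 := by positivity
      have hmul := mul_pos (sub_pos.mpr hcon) hsum
      linarith [key, hmul]
    -- nonexpansive bound: ‖f'x - f'y‖² ≤ δ‖x-y‖²
    have N : ∀ x y, ‖f' x - f' y‖ ^ 2 ≤ δ * ‖x - y‖ ^ 2 := by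
      intro x y
      have h1 := I1 x y
      have h2 := I2 x y
      linarith
    intro x y
    rcases eq_or_lt_of_le hδ0 with hδz | hδpos
    · -- δ = 0
      have := N x y
      rw [← hδz] at this ⊢
      have hg : ‖f' x - f' y‖ = 0 := by nlinarith [norm_nonneg (f' x - f' y)]
      rw [hg]; simp
    · -- δ > 0: the Baillon-Haddad argument
      set h : EuclideanSpace ℝ (Fin n) → ℝ := fun z => δ / 2 * ‖z‖ ^ 2 - f z with hh
      set h' : EuclideanSpace ℝ (Fin n) → EuclideanSpace ℝ (Fin n) :=
        fun z => δ • z - f' z with hh'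
      have dd : ∀ u w : EuclideanSpace ℝ (Fin n), ∀ t : ℝ,
          HasDerivAt (fun s : ℝ => h (u + s • w)) ⟪h' (u + t • w), w⟫ t := by
        intro u w t
        have hf1 := dirDeriv hf u w t
        have hexp : (fun s : ℝ => δ / 2 * ‖u + s • w‖ ^ 2)
            = fun s : ℝ => δ / 2 * (‖u‖ ^ 2 + 2 * s * ⟪u, w⟫ + s ^ 2 * ‖w‖ ^ 2) := by
          funext s
          congr 1
          simp only [← real_inner_self_eq_norm_sq, inner_add_add_self, real_inner_smul_left,
            real_inner_smul_right, real_inner_comm w u]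
          ring
        have hpoly : HasDerivAt (fun s : ℝ => ‖u‖ ^ 2 + 2 * s * ⟪u, w⟫ + s ^ 2 * ‖w‖ ^ 2)
            (2 * ⟪u, w⟫ + 2 * t * ‖w‖ ^ 2) t := by
          have d1 : HasDerivAt (fun s : ℝ => 2 * s * ⟪u, w⟫) (2 * ⟪u, w⟫) t := by
            have := ((hasDerivAt_id t).const_mul (2:ℝ)).mul_const ⟪u, w⟫
            simpa using this
          have d2 : HasDerivAt (fun s : ℝ => s ^ 2 * ‖w‖ ^ 2) (2 * t * ‖w‖ ^ 2) t := by
            have := (hasDerivAt_pow 2 t).mul_const (‖w‖ ^ 2)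
            simpa [mul_comm] using this
          exact (d1.const_add (‖u‖ ^ 2)).add d2
        have hq : HasDerivAt (fun s : ℝ => δ / 2 * ‖u + s • w‖ ^ 2)
            (δ * ⟪u + t • w, w⟫) t := by
          rw [hexp]
          have hD := hpoly.const_mul (δ / 2)
          have hval : δ / 2 * (2 * ⟪u, w⟫ + 2 * t * ‖w‖ ^ 2) = δ * ⟪u + t • w, w⟫ := by
            rw [inner_add_left, real_inner_smul_left, real_inner_self_eq_norm_sq]
            ring
          rw [hval] at hD
          exact hD
        have hfin := hq.sub hf1
        have hval2 : δ * ⟪u + t • w, w⟫ - ⟪f' (u + t • w), w⟫ = ⟪h' (u + t • w), w⟫ := by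
          rw [hh']
          simp only
          rw [inner_sub_left, real_inner_smul_left]
        rw [hval2] at hfin
        exact hfin
      have mono : ∀ a b, 0 ≤ ⟪h' a - h' b, a - b⟫ := by
        intro a b
        have : h' a - h' b = δ • (a - b) - (f' a - f' b) := by
          rw [hh']; simp only; rw [smul_sub]; abel
        rw [this, inner_sub_left, real_inner_smul_left, real_inner_self_eq_norm_sq]
        have := abs_le.mp (M a b)
        linarith [this.2]
      have smooth : ∀ a b, ⟪h' a - h' b, a - b⟫ ≤ (2 * δ) * ‖a - b‖ ^ 2 := by
        intro a b
        have : h' a - h' b = δ • (a - b) - (f' a - f' b) := by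
          rw [hh']; simp only; rw [smul_sub]; abel
        rw [this, inner_sub_left, real_inner_smul_left, real_inner_self_eq_norm_sq]
        have := abs_le.mp (M a b)
        linarith [this.1]
      have coco := cocoercive (by linarith : (0:ℝ) < 2 * δ)
        (lower_bd dd mono) (upper_bd dd smooth) x y
      -- expand
      have hexp : h' x - h' y = δ • (x - y) - (f' x - f' y) := by
        rw [hh']; simp only; rw [smul_sub]; abel
      rw [hexp] at coco
      have hns : ‖δ • (x - y)‖ ^ 2 = δ ^ 2 * ‖x - y‖ ^ 2 := by
        rw [norm_smul, Real.norm_eq_abs, mul_pow, sq_abs]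
      rw [norm_sub_sq_real, hns, inner_sub_left, real_inner_smul_left, real_inner_smul_left,
        real_inner_self_eq_norm_sq, real_inner_comm (x - y) (f' x - f' y)] at coco
      have hfin : ‖f' x - f' y‖ ^ 2 ≤ (δ * ‖x - y‖) ^ 2 := by nlinarith [coco]
      exact le_of_sq_le_sq' (norm_nonneg _) (by positivity) hfin
end

section
/- Let f: ℝⁿ → ℝ be differentiable and δ ∈ (0,1]. Then ∇f is (1/δ)-cocoercive if and only if ∇f is (1/2)-averaged and ((δ+1)/2)-negatively averaged. -/
open scoped RealInnerProductSpace

section Aux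

variable {E : Type*} [NormedAddCommGroup E] [InnerProductSpace ℝ E] [CompleteSpace E]

/-- Gradient inequality for a function with monotone gradient. -/
lemma grad_ineq (g : E → ℝ) (g' : E → E) (hg : ∀ x, HasGradientAt g (g' x) x)
    (mono : ∀ x y, 0 ≤ ⟪g' x - g' y, x - y⟫) (x z : E) :
    g x + ⟪g' x, z - x⟫ ≤ g z := by
  set d := z - x with hd
  have hψ : ∀ t : ℝ, HasDerivAt (fun t : ℝ => g (x + t • d)) ⟪g' (x + t • d), d⟫ t := by
    intro t
    have h1 : HasDerivAt (fun t : ℝ => x + t • d) d t := by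
      simpa using ((hasDerivAt_id t).smul_const d).const_add x
    have h2 := (hasGradientAt_iff_hasFDerivAt.mp (hg (x + t • d))).comp_hasDerivAt t h1
    simpa [Function.comp_def] using h2
  obtain ⟨c, hc, hceq⟩ := exists_hasDerivAt_eq_slope (fun t : ℝ => g (x + t • d))
    (fun t => ⟪g' (x + t • d), d⟫) one_pos
    (fun t _ => (hψ t).continuousAt.continuousWithinAt) (fun t _ => hψ t)
  have hmono : ⟪g' x, d⟫ ≤ ⟪g' (x + c • d), d⟫ := by
    have h := mono (x + c • d) x
    have h2 : (x + c • d) - x = c • d := by abel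
    rw [h2, real_inner_smul_right] at h
    nlinarith [hc.1, inner_sub_left (𝕜 := ℝ) (g' (x + c • d)) (g' x) d]
  have h1 : g (x + (1:ℝ) • d) = g z := by rw [one_smul, hd]; congr 1; abel
  have h0 : g (x + (0:ℝ) • d) = g x := by rw [zero_smul, add_zero]
  rw [h1, h0] at hceq
  rw [hceq] at hmono
  linarith [hmono]

omit [CompleteSpace E] in
lemma sq_norm_le_iff {u v : E} {a : ℝ} (ha : 0 ≤ a) :
    ‖u‖ ≤ a * ‖v‖ ↔ ‖u‖ ^ 2 ≤ (a * ‖v‖) ^ 2 := by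
  constructor
  · intro h; exact pow_le_pow_left₀ (norm_nonneg u) h 2
  · intro h
    exact (pow_le_pow_iff_left₀ (norm_nonneg u) (by positivity) two_ne_zero).mp h

omit [CompleteSpace E] in
lemma norm_combo_sq (u v : E) (c b : ℝ) :
    ‖c • u - b • v‖ ^ 2 = c^2*‖u‖^2 - 2*(c*b)*⟪u,v⟫ + b^2*‖v‖^2 := by
  rw [norm_sub_sq_real]
  simp only [norm_smul, real_inner_smul_left, real_inner_smul_right, mul_pow,
    Real.norm_eq_abs, sq_abs]
  ring

lemma hasGradientAt_quad_sub (g : E → ℝ) (g' : E → E) (hg : ∀ x, HasGradientAt g (g' x) x)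
    (δ : ℝ) (x : E) :
    HasGradientAt (fun w => δ / 2 * ‖w‖ ^ 2 - g w) (δ • x - g' x) x := by
  have h1 : HasFDerivAt (fun w : E => ‖w‖ ^ 2) (2 • (innerSL ℝ x)) x := by
    simpa using (hasFDerivAt_id x).norm_sq
  have h2 : HasFDerivAt (fun w : E => δ / 2 * ‖w‖ ^ 2 - g w)
      ((δ / 2) • (2 • (innerSL ℝ x)) - InnerProductSpace.toDual ℝ E (g' x)) x :=
    (h1.const_mul (δ / 2)).sub (hasGradientAt_iff_hasFDerivAt.mp (hg x))
  rw [hasGradientAt_iff_hasFDerivAt]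
  refine h2.congr_fderiv ?_
  ext v
  simp only [InnerProductSpace.toDual_apply_apply, inner_sub_left, real_inner_smul_left,
    ContinuousLinearMap.sub_apply, ContinuousLinearMap.smul_apply,
    ContinuousLinearMap.smul_apply, innerSL_apply_apply, smul_eq_mul]
  ring

end Aux

lemma averaged_iff {n : ℕ} (T : EuclideanSpace ℝ (Fin n) → EuclideanSpace ℝ (Fin n))
    (α : ℝ) (hα : 0 < α) :
    Averaged T α ↔ ∀ x y, ‖(T x - T y) - (1 - α) • (x - y)‖ ≤ α * ‖x - y‖ := by
  constructor
  · rintro ⟨S, hS, hTS⟩ x y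
    have h : (T x - T y) - (1 - α) • (x - y) = α • (S x - S y) := by
      rw [hTS x, hTS y]; module
    rw [h, norm_smul, Real.norm_eq_abs, abs_of_pos hα]
    exact mul_le_mul_of_nonneg_left (hS x y) hα.le
  · intro h
    refine ⟨fun x => α⁻¹ • (T x - (1 - α) • x), fun x y => ?_, fun x => ?_⟩
    · have h2 : α⁻¹ • (T x - (1 - α) • x) - α⁻¹ • (T y - (1 - α) • y)
          = α⁻¹ • ((T x - T y) - (1 - α) • (x - y)) := by module
      rw [h2, norm_smul, Real.norm_eq_abs, abs_of_pos (inv_pos.2 hα)]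
      calc α⁻¹ * ‖(T x - T y) - (1 - α) • (x - y)‖ ≤ α⁻¹ * (α * ‖x - y‖) :=
            mul_le_mul_of_nonneg_left (h x y) (inv_pos.2 hα).le
        _ = ‖x - y‖ := by field_simp
    · have h3 : α • (α⁻¹ • (T x - (1 - α) • x)) = T x - (1 - α) • x :=
        smul_inv_smul₀ hα.ne' _
      rw [h3]; abel

lemma averaged_iff_inner {n : ℕ} (f' : EuclideanSpace ℝ (Fin n) → EuclideanSpace ℝ (Fin n))
    (T : EuclideanSpace ℝ (Fin n) → EuclideanSpace ℝ (Fin n)) (β c b : ℝ) (hβ : 0 < β)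
    (hT : ∀ x y, T x - T y = c • (f' x - f' y)) (hb : 1 - β = b) :
    Averaged T β ↔ ∀ x y,
      c^2*‖f' x - f' y‖^2 - 2*(c*b)*⟪f' x - f' y, x - y⟫ + b^2*‖x-y‖^2 ≤ β^2*‖x-y‖^2 := by
  rw [averaged_iff T β hβ]
  refine forall₂_congr fun x y => ?_
  rw [hT x y, hb, sq_norm_le_iff hβ.le, norm_combo_sq, mul_pow]

theorem stmt5 {n : ℕ} (f : EuclideanSpace ℝ (Fin n) → ℝ)
    (f' : EuclideanSpace ℝ (Fin n) → EuclideanSpace ℝ (Fin n))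
    (hf : ∀ x, HasGradientAt f (f' x) x)
    (δ : ℝ) (hδ0 : 0 < δ) (hδ1 : δ ≤ 1) :
    Averaged (fun x => (1/δ) • f' x) (1/2) ↔
    (Averaged f' (1/2) ∧ Averaged (fun x => -f' x) ((δ + 1)/2)) := by
  have hδ := hδ0.ne'
  have hδ2 : (0:ℝ) < δ^2 := by positivity
  rw [averaged_iff_inner f' _ (1/2) (1/δ) (1/2) (by norm_num)
    (fun x y => by simp [smul_sub]) (by norm_num),
    averaged_iff_inner f' f' (1/2) 1 (1/2) (by norm_num)
    (fun x y => (one_smul ℝ _).symm) (by norm_num),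
    averaged_iff_inner f' _ ((δ+1)/2) (-1) ((1-δ)/2) (by linarith)
    (fun x y => by show -f' x - -f' y = _; module) (by ring)]
  have hAiff : ∀ x y : EuclideanSpace ℝ (Fin n),
      ((1/δ)^2*‖f' x - f' y‖^2 - 2*(1/δ*(1/2))*⟪f' x - f' y, x - y⟫
        + (1/2)^2*‖x-y‖^2 ≤ (1/2)^2*‖x-y‖^2)
      ↔ ‖f' x - f' y‖^2 ≤ δ*⟪f' x - f' y, x - y⟫ := by
    intro x y
    rw [show (1/δ)^2*‖f' x - f' y‖^2 - 2*(1/δ*(1/2))*⟪f' x - f' y, x - y⟫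
        + (1/2)^2*‖x-y‖^2
        = (‖f' x - f' y‖^2 - δ*⟪f' x - f' y, x - y⟫)/δ^2 + (1/2)^2*‖x-y‖^2 from by
      field_simp]
    rw [add_le_iff_nonpos_left, div_le_iff₀ hδ2, zero_mul, sub_nonpos]
  have hBiff : ∀ x y : EuclideanSpace ℝ (Fin n),
      (1^2*‖f' x - f' y‖^2 - 2*(1*(1/2))*⟪f' x - f' y, x - y⟫
        + (1/2)^2*‖x-y‖^2 ≤ (1/2)^2*‖x-y‖^2)
      ↔ ‖f' x - f' y‖^2 ≤ ⟪f' x - f' y, x - y⟫ := by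
    intro x y; constructor <;> intro h <;> linarith
  have hCiff : ∀ x y : EuclideanSpace ℝ (Fin n),
      ((-1)^2*‖f' x - f' y‖^2 - 2*(-1*((1-δ)/2))*⟪f' x - f' y, x - y⟫
        + ((1-δ)/2)^2*‖x-y‖^2 ≤ ((δ+1)/2)^2*‖x-y‖^2)
      ↔ ‖f' x - f' y‖^2 + (1-δ)*⟪f' x - f' y, x - y⟫ ≤ δ*‖x-y‖^2 := by
    intro x y; constructor <;> intro h <;> nlinarith [h]
  simp only [hAiff, hBiff, hCiff]
  constructor
  · intro hA
    have hp : ∀ x y : EuclideanSpace ℝ (Fin n), 0 ≤ ⟪f' x - f' y, x - y⟫ := by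
      intro x y; nlinarith [hA x y, sq_nonneg ‖f' x - f' y‖]
    have hab : ∀ x y : EuclideanSpace ℝ (Fin n), ‖f' x - f' y‖ ≤ δ * ‖x - y‖ := by
      intro x y
      rcases eq_or_lt_of_le (norm_nonneg (f' x - f' y)) with h0 | h0
      · rw [← h0]; positivity
      · have h2 : ‖f' x - f' y‖ * ‖f' x - f' y‖ ≤ (δ * ‖x - y‖) * ‖f' x - f' y‖ := by
          nlinarith [hA x y,
            mul_le_mul_of_nonneg_left (real_inner_le_norm (f' x - f' y) (x - y)) hδ0.le]
        exact le_of_mul_le_mul_right h2 h0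
    refine ⟨fun x y => by nlinarith [hA x y, hp x y], fun x y => ?_⟩
    have h3 := mul_le_mul_of_nonneg_right (hab x y) (norm_nonneg (x - y))
    have hcs := real_inner_le_norm (f' x - f' y) (x - y)
    nlinarith [hA x y, hp x y, h3, hcs]
  · rintro ⟨hB', hC'⟩
    have mono_f : ∀ x y : EuclideanSpace ℝ (Fin n), (0:ℝ) ≤ ⟪f' x - f' y, x - y⟫ :=
      fun x y => le_trans (sq_nonneg _) (hB' x y)
    have hub : ∀ x y : EuclideanSpace ℝ (Fin n), ⟪f' x - f' y, x - y⟫ ≤ δ * ‖x - y‖^2 := by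
      intro x y
      have hcs := real_inner_le_norm (f' x - f' y) (x - y)
      have hp := mono_f x y
      have h1 : ⟪f' x - f' y, x - y⟫ * ⟪f' x - f' y, x - y⟫
          ≤ (‖f' x - f' y‖ * ‖x - y‖) * (‖f' x - f' y‖ * ‖x - y‖) :=
        mul_self_le_mul_self hp hcs
      have h2 := mul_le_mul_of_nonneg_right (hC' x y) (sq_nonneg ‖x - y‖)
      by_cases hb0 : ‖x - y‖ = 0
      · have hxy : x - y = 0 := norm_eq_zero.mp hb0
        rw [hxy]
        simp
      · have hbpos : 0 < ‖x - y‖ := lt_of_le_of_ne (norm_nonneg _) (Ne.symm hb0)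
        nlinarith [h1, h2, hp, mul_pos hbpos hbpos]
    have mono_q : ∀ x y : EuclideanSpace ℝ (Fin n),
        (0:ℝ) ≤ ⟪(δ • x - f' x) - (δ • y - f' y), x - y⟫ := by
      intro x y
      have he : (δ • x - f' x) - (δ • y - f' y) = δ • (x - y) - (f' x - f' y) := by module
      rw [he, inner_sub_left, real_inner_smul_left, real_inner_self_eq_norm_sq]
      linarith [hub x y]
    have hq : ∀ x z : EuclideanSpace ℝ (Fin n),
        δ / 2 * ‖x‖ ^ 2 - f x + ⟪δ • x - f' x, z - x⟫ ≤ δ / 2 * ‖z‖ ^ 2 - f z :=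
      fun x z => grad_ineq (fun w => δ / 2 * ‖w‖ ^ 2 - f w) (fun x => δ • x - f' x)
        (fun x => hasGradientAt_quad_sub f f' hf δ x) mono_q x z
    have hcv : ∀ x z : EuclideanSpace ℝ (Fin n), f x + ⟪f' x, z - x⟫ ≤ f z :=
      grad_ineq f f' hf mono_f
    have key : ∀ x y : EuclideanSpace ℝ (Fin n),
        f y + ⟪f' y, x - y⟫ + δ⁻¹/2 * ‖f' x - f' y‖^2 ≤ f x := by
      intro x y
      set u := f' x - f' y with hu
      set z := x - δ⁻¹ • u with hz
      have ezx : z - x = -(δ⁻¹ • u) := by rw [hz]; abel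
      have e1 : ⟪f' y, z - y⟫ = ⟪f' y, x - y⟫ - δ⁻¹ * ⟪f' y, u⟫ := by
        rw [hz, show x - δ⁻¹ • u - y = (x - y) - δ⁻¹ • u by abel,
          inner_sub_right, real_inner_smul_right]
      have e2 : ⟪δ • x - f' x, z - x⟫ = -(δ⁻¹ * (δ * ⟪x, u⟫ - ⟪f' x, u⟫)) := by
        rw [ezx, inner_neg_right, real_inner_smul_right, inner_sub_left,
          real_inner_smul_left]
      have e3 : ‖z‖^2 = ‖x‖^2 - 2 * (δ⁻¹ * ⟪x, u⟫) + δ⁻¹^2 * ‖u‖^2 := by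
        rw [hz, norm_sub_sq_real, norm_smul, real_inner_smul_right, Real.norm_eq_abs,
          mul_pow, sq_abs]
      have e4 : δ⁻¹ * ⟪f' x, u⟫ - δ⁻¹ * ⟪f' y, u⟫ = δ⁻¹ * ‖u‖^2 := by
        rw [← mul_sub, ← inner_sub_left, hu, real_inner_self_eq_norm_sq]
      have c1 : δ⁻¹ * (δ * ⟪x, u⟫ - ⟪f' x, u⟫) = ⟪x, u⟫ - δ⁻¹ * ⟪f' x, u⟫ := by
        field_simp
      have c2 : δ/2 * (‖x‖^2 - 2 * (δ⁻¹ * ⟪x, u⟫) + δ⁻¹^2 * ‖u‖^2)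
          = δ/2 * ‖x‖^2 - ⟪x, u⟫ + δ⁻¹/2 * ‖u‖^2 := by
        field_simp
      have h1 := hcv y z
      have h2 := hq x z
      rw [e1] at h1
      rw [e2, e3] at h2
      linarith [h1, h2, e4, c1, c2]
    intro x y
    have k1 := key x y
    have k2 := key y x
    rw [norm_sub_rev] at k2
    have e6 : ⟪f' y, x - y⟫ + ⟪f' x, y - x⟫ = -⟪f' x - f' y, x - y⟫ := by
      rw [inner_sub_left, show y - x = -(x - y) by abel, inner_neg_right]; ring
    have hfinal : δ⁻¹ * ‖f' x - f' y‖^2 ≤ ⟪f' x - f' y, x - y⟫ := by linarith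
    have := mul_le_mul_of_nonneg_left hfinal hδ0.le
    rw [← mul_assoc, mul_inv_cancel₀ hδ, one_mul] at this
    exact this
end

section
/- Suppose S₁x = Px + q with P a self-adjoint nonexpansive linear operator on ℝⁿ and q ∈ ℝⁿ, S₂ = ∇f₂ for a differentiable function f₂: ℝⁿ → ℝ, and S₂ is α-averaged and β-negatively averaged with α, β ∈ (0,1]. Let δ_α = 2α - 1 and δ_β = 2β - 1, and define F(x) = ½⟨Px, x⟩ - f₂(Px + q). Then for all x, y ∈ ℝⁿ: ½⟨(P - δ_β P²)(x-y), x-y⟩ ≤ F(x) - F(y) - ⟨∇F(y), x-y⟩ ≤ ½⟨(P + δ_α P²)(x-y), x-y⟩. -/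
open scoped RealInnerProductSpace

lemma avg_inner_bound {n : ℕ} {T : EuclideanSpace ℝ (Fin n) → EuclideanSpace ℝ (Fin n)}
    {α : ℝ} (h : Averaged T α) (hα : 0 ≤ α) (a b : EuclideanSpace ℝ (Fin n)) :
    (1 - 2*α) * ‖a - b‖^2 ≤ ⟪T a - T b, a - b⟫ := by
  obtain ⟨R, hR, hT⟩ := h
  have hd : T a - T b = (1 - α) • (a - b) + α • (R a - R b) := by
    rw [hT a, hT b]; module
  rw [hd, inner_add_left, real_inner_smul_left, real_inner_smul_left,
    real_inner_self_eq_norm_sq]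
  have h1 : |⟪R a - R b, a - b⟫| ≤ ‖R a - R b‖ * ‖a - b‖ := abs_real_inner_le_norm _ _
  have h2 : ‖R a - R b‖ ≤ ‖a - b‖ := hR a b
  have h3 : (0:ℝ) ≤ ‖a - b‖ := norm_nonneg _
  have h4 : -⟪R a - R b, a - b⟫ ≤ |⟪R a - R b, a - b⟫| := neg_le_abs _
  have h5 : -⟪R a - R b, a - b⟫ ≤ ‖a - b‖^2 := by nlinarith [norm_nonneg (R a - R b)]
  nlinarith [mul_le_mul_of_nonneg_left h5 hα]

lemma key_mono (φ φ' : ℝ → ℝ) (hφ : ∀ t, HasDerivAt φ (φ' t) t) (c : ℝ)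
    (hc : ∀ t ∈ Set.Ioo (0:ℝ) 1, φ' t ≤ φ' 0 + c * t) :
    φ 1 - φ 0 - φ' 0 ≤ c / 2 := by
  set h : ℝ → ℝ := fun t => φ' 0 * t + c * t^2 / 2 - φ t with hh
  have hd : ∀ t, HasDerivAt h (φ' 0 + c * t - φ' t) t := by
    intro t
    have h1 : HasDerivAt (fun t : ℝ => φ' 0 * t + c * t^2 / 2)
        (φ' 0 + c * (2 * t) / 2) t := by
      have := ((hasDerivAt_id t).const_mul (φ' 0)).add
        (((hasDerivAt_pow 2 t).const_mul c).div_const 2)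
      simpa [pow_one, Pi.add_def] using this
    have := h1.sub (hφ t)
    exact this.congr_deriv (by ring)
  have hmono : MonotoneOn h (Set.Icc 0 1) := by
    apply monotoneOn_of_deriv_nonneg (convex_Icc 0 1)
    · exact (fun t _ => ((hd t).continuousAt).continuousWithinAt)
    · intro t ht
      exact ((hd t).differentiableAt).differentiableWithinAt
    · intro t ht
      rw [interior_Icc] at ht
      rw [(hd t).deriv]
      have := hc t ht
      linarith
  have := hmono (Set.left_mem_Icc.2 one_pos.le) (Set.right_mem_Icc.2 one_pos.le) one_pos.le
  simp only [hh] at this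
  nlinarith

set_option maxHeartbeats 1000000 in
theorem stmt6 {n : ℕ}
    (P : EuclideanSpace ℝ (Fin n) →L[ℝ] EuclideanSpace ℝ (Fin n))
    (hPsa : ∀ x y, ⟪P x, y⟫ = ⟪x, P y⟫) (hPne : ∀ x, ‖P x‖ ≤ ‖x‖)
    (q : EuclideanSpace ℝ (Fin n))
    (f₂ : EuclideanSpace ℝ (Fin n) → ℝ)
    (S₂ : EuclideanSpace ℝ (Fin n) → EuclideanSpace ℝ (Fin n))
    (hf₂ : ∀ x, HasGradientAt f₂ (S₂ x) x)
    (α β : ℝ) (hα0 : 0 < α) (hα1 : α ≤ 1) (hβ0 : 0 < β) (hβ1 : β ≤ 1)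
    (havg : Averaged S₂ α) (hnavg : Averaged (fun x => -S₂ x) β)
    (F : EuclideanSpace ℝ (Fin n) → ℝ)
    (hF : ∀ x, F x = 1/2 * ⟪P x, x⟫ - f₂ (P x + q)) :
    ∀ x y,
      1/2 * ⟪(P - (2*β - 1) • (P.comp P)) (x - y), x - y⟫ ≤
        F x - F y - ⟪P (y - S₂ (P y + q)), x - y⟫ ∧
      F x - F y - ⟪P (y - S₂ (P y + q)), x - y⟫ ≤
        1/2 * ⟪(P + (2*α - 1) • (P.comp P)) (x - y), x - y⟫ := by
  intro x y
  set d := x - y with hd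
  set u := P y + q with hu
  -- the path
  set φ : ℝ → ℝ := fun t => F (y + t • d) with hφdef
  -- derivative of φ
  have hPyd : ⟪P d, y⟫ = ⟪P y, d⟫ := by
    rw [hPsa d y, real_inner_comm]
  have hφ' : ∀ t, HasDerivAt φ
      (⟪P y, d⟫ + t * ⟪P d, d⟫ - ⟪S₂ (u + t • P d), P d⟫) t := by
    intro t
    have hrw : φ = fun t : ℝ =>
        (1/2 * ⟪P y, y⟫ + t * ⟪P y, d⟫ + t^2 * (1/2 * ⟪P d, d⟫)) - f₂ (u + t • P d) := by
      funext s
      have h1 : P (y + s • d) = P y + s • P d := by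
        rw [map_add, map_smul]
      have h2 : P (y + s • d) + q = u + s • P d := by
        rw [h1, hu]; module
      rw [hφdef]
      simp only [hF, h1, h2]
      rw [inner_add_left, inner_add_right, inner_add_right, real_inner_smul_left,
        real_inner_smul_left, real_inner_smul_right, real_inner_smul_right, hPyd]
      have harg : P y + s • P d + q = u + s • P d := by rw [hu]; module
      rw [harg]
      ring
    rw [hrw]
    have hcurve : HasDerivAt (fun s : ℝ => u + s • P d) (P d) t := by
      simpa using ((hasDerivAt_id t).smul_const (P d)).const_add u
    have hf : HasDerivAt (fun s : ℝ => f₂ (u + s • P d)) ⟪S₂ (u + t • P d), P d⟫ t := by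
      have := (hf₂ (u + t • P d)).hasFDerivAt.comp_hasDerivAt t hcurve
      simpa [InnerProductSpace.toDual_apply_apply, Function.comp_def] using this
    have hpoly : HasDerivAt (fun s : ℝ =>
        1/2 * ⟪P y, y⟫ + s * ⟪P y, d⟫ + s^2 * (1/2 * ⟪P d, d⟫))
        (⟪P y, d⟫ + 2 * t * (1/2 * ⟪P d, d⟫)) t := by
      have := (((hasDerivAt_id t).mul_const ⟪P y, d⟫).const_add (1/2 * ⟪P y, y⟫)).add
        ((hasDerivAt_pow 2 t).mul_const (1/2 * ⟪P d, d⟫))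
      simpa [pow_one, Pi.add_def] using this
    have := hpoly.sub hf
    exact this.congr_deriv (by ring)
  -- endpoint values
  have hφ1 : φ 1 = F x := by simp [hφdef, hd]
  have hφ0 : φ 0 = F y := by simp [hφdef]
  have hgrad : ⟪P (y - S₂ (P y + q)), x - y⟫ = ⟪P y, d⟫ + 0 * ⟪P d, d⟫ - ⟪S₂ (u + (0:ℝ) • P d), P d⟫ := by
    rw [map_sub, inner_sub_left, hPsa (S₂ (P y + q)) d]
    simp [hu, hd.symm]
  -- RHS quadratic forms
  have hP2 : ⟪P (P d), d⟫ = ‖P d‖^2 := by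
    rw [hPsa (P d) d, ← real_inner_self_eq_norm_sq, real_inner_comm]
  -- averagedness increment bounds
  have hub : ∀ t ∈ Set.Ioo (0:ℝ) 1,
      -(⟪S₂ (u + t • P d), P d⟫ - ⟪S₂ (u + (0:ℝ) • P d), P d⟫) ≤ (2*α - 1) * t * ‖P d‖^2 := by
    intro t ht
    have ht0 : 0 < t := ht.1
    have := avg_inner_bound havg hα0.le (u + t • P d) u
    have hab : (u + t • P d) - u = t • P d := by module
    rw [hab, real_inner_smul_right, inner_sub_left, norm_smul, Real.norm_eq_abs,
      abs_of_pos ht0] at this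
    simp only [zero_smul, add_zero]
    nlinarith [this, norm_nonneg (P d)]
  have hlb : ∀ t ∈ Set.Ioo (0:ℝ) 1,
      (⟪S₂ (u + t • P d), P d⟫ - ⟪S₂ (u + (0:ℝ) • P d), P d⟫) ≤ (2*β - 1) * t * ‖P d‖^2 := by
    intro t ht
    have ht0 : 0 < t := ht.1
    have := avg_inner_bound hnavg hβ0.le (u + t • P d) u
    have hab : (u + t • P d) - u = t • P d := by module
    simp only [hab] at this
    rw [real_inner_smul_right, norm_smul, Real.norm_eq_abs, abs_of_pos ht0] at this
    have hinner : ⟪-S₂ (u + t • P d) - -S₂ u, P d⟫ =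
        -(⟪S₂ (u + t • P d), P d⟫ - ⟪S₂ u, P d⟫) := by
      rw [inner_sub_left, inner_neg_left, inner_neg_left]; ring
    rw [hinner] at this
    simp only [zero_smul, add_zero]
    nlinarith [norm_nonneg (P d)]
  -- apply key_mono for upper bound
  have hupper := key_mono φ _ hφ' (⟪P d, d⟫ + (2*α - 1) * ‖P d‖^2) (by
    intro t ht
    have := hub t ht
    have ht0 : (0:ℝ) ≤ t := le_of_lt ht.1
    nlinarith)
  have hlower := key_mono (fun t => -φ t) (fun t => -(⟪P y, d⟫ + t * ⟪P d, d⟫ - ⟪S₂ (u + t • P d), P d⟫))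
    (fun t => (hφ' t).neg) (-(⟪P d, d⟫ - (2*β - 1) * ‖P d‖^2)) (by
    intro t ht
    have := hlb t ht
    have ht0 : (0:ℝ) ≤ t := le_of_lt ht.1
    nlinarith)
  rw [hφ1, hφ0] at hupper hlower
  constructor
  · rw [hgrad]
    rw [ContinuousLinearMap.sub_apply, ContinuousLinearMap.smul_apply,
      ContinuousLinearMap.comp_apply, inner_sub_left, real_inner_smul_left, hP2]
    linarith
  · rw [hgrad]
    rw [ContinuousLinearMap.add_apply, ContinuousLinearMap.smul_apply,
      ContinuousLinearMap.comp_apply, inner_add_left, real_inner_smul_left, hP2]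
    linarith
end

section
/- Under the envelope setup (S₁ = P(·) + q with P self-adjoint nonexpansive and positive semidefinite, S₂ = ∇f₂ nonexpansive), the envelope F(x) = ½⟨Px,x⟩ - f₂(Px+q) is convex. -/
open scoped RealInnerProductSpace

/-- Cauchy–Schwarz for the positive semidefinite form `⟪P·,·⟫`. -/
lemma psd_cs {n : ℕ} (P : EuclideanSpace ℝ (Fin n) →L[ℝ] EuclideanSpace ℝ (Fin n))
    (hPsa : ∀ x y, ⟪P x, y⟫ = ⟪x, P y⟫) (hPpsd : ∀ x, 0 ≤ ⟪P x, x⟫)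
    (v w : EuclideanSpace ℝ (Fin n)) :
    ⟪P v, w⟫ ^ 2 ≤ ⟪P v, v⟫ * ⟪P w, w⟫ := by
  have hsym : ⟪P w, v⟫ = ⟪P v, w⟫ := by rw [hPsa w v, real_inner_comm]
  have h : ∀ t : ℝ, 0 ≤ ⟪P w, w⟫ * (t * t) + (2 * ⟪P v, w⟫) * t + ⟪P v, v⟫ := by
    intro t
    have := hPpsd (t • w + v)
    simp only [map_add, map_smul, inner_add_left, inner_add_right,
      real_inner_smul_left, real_inner_smul_right] at this
    rw [hsym] at this
    nlinarith [this]
  have := discrim_le_zero h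
  rw [discrim] at this
  nlinarith [this]

lemma key_ineq_s8 {n : ℕ} (P : EuclideanSpace ℝ (Fin n) →L[ℝ] EuclideanSpace ℝ (Fin n))
    (hPsa : ∀ x y, ⟪P x, y⟫ = ⟪x, P y⟫) (hPne : ∀ x, ‖P x‖ ≤ ‖x‖)
    (hPpsd : ∀ x, 0 ≤ ⟪P x, x⟫) (v : EuclideanSpace ℝ (Fin n)) :
    ‖P v‖ ^ 2 ≤ ⟪P v, v⟫ := by
  rcases eq_or_ne (‖P v‖) 0 with h0 | h0
  · rw [h0]; simpa using hPpsd v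
  have h1 : ⟪P v, P v⟫ ^ 2 ≤ ⟪P v, v⟫ * ⟪P (P v), P v⟫ := psd_cs P hPsa hPpsd v (P v)
  have h2 : ⟪P (P v), P v⟫ ≤ ‖P v‖ ^ 2 := by
    calc ⟪P (P v), P v⟫ ≤ ‖P (P v)‖ * ‖P v‖ := real_inner_le_norm _ _
      _ ≤ ‖P v‖ * ‖P v‖ := by gcongr; exact hPne _
      _ = ‖P v‖ ^ 2 := (sq ‖P v‖).symm
  have h3 : ⟪P v, P v⟫ = ‖P v‖ ^ 2 := real_inner_self_eq_norm_sq _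
  have hpos : (0:ℝ) < ‖P v‖ ^ 2 := by positivity
  nlinarith [hPpsd v]

theorem stmt8 {n : ℕ}
    (P : EuclideanSpace ℝ (Fin n) →L[ℝ] EuclideanSpace ℝ (Fin n))
    (hPsa : ∀ x y, ⟪P x, y⟫ = ⟪x, P y⟫) (hPne : ∀ x, ‖P x‖ ≤ ‖x‖)
    (hPpsd : ∀ x, 0 ≤ ⟪P x, x⟫)
    (q : EuclideanSpace ℝ (Fin n))
    (f₂ : EuclideanSpace ℝ (Fin n) → ℝ)
    (S₂ : EuclideanSpace ℝ (Fin n) → EuclideanSpace ℝ (Fin n))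
    (hf₂ : ∀ x, HasGradientAt f₂ (S₂ x) x)
    (hS₂ : Nonexpansive S₂) :
    ConvexOn ℝ Set.univ (fun x => 1/2 * ⟪P x, x⟫ - f₂ (P x + q)) := by
  set F : EuclideanSpace ℝ (Fin n) → ℝ := fun x => 1/2 * ⟪P x, x⟫ - f₂ (P x + q) with hF
  refine ⟨convex_univ, ?_⟩
  intro x _ y _ a b ha hb hab
  set v := y - x with hv
  set g : ℝ → ℝ := fun t => F (x + t • v) with hg
  have hsym : ∀ z w : EuclideanSpace ℝ (Fin n), ⟪P z, w⟫ = ⟪P w, z⟫ := by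
    intro z w; rw [hPsa z w, real_inner_comm]
  -- derivative of g
  have hderiv : ∀ t : ℝ, HasDerivAt g (⟪P (x + t • v), v⟫ - ⟪S₂ (P (x + t • v) + q), P v⟫) t := by
    intro t
    have hline : HasDerivAt (fun t : ℝ => x + t • v) v t := by
      simpa using ((hasDerivAt_id t).smul_const v).const_add x
    have hq1 : HasDerivAt (fun t : ℝ => (1:ℝ)/2 * ⟪P (x + t • v), x + t • v⟫)
        (⟪P (x + t • v), v⟫) t := by
      have heq : (fun t : ℝ => (1:ℝ)/2 * ⟪P (x + t • v), x + t • v⟫)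
          = fun t : ℝ => (1/2 * ⟪P v, v⟫) * t ^ 2 + ⟪P v, x⟫ * t + 1/2 * ⟪P x, x⟫ := by
        funext s
        simp only [map_add, map_smul, inner_add_left, inner_add_right,
          real_inner_smul_left, real_inner_smul_right]
        rw [hsym x v]
        ring
      rw [heq]
      have h1 : HasDerivAt (fun s : ℝ => s ^ 2) (2 * t) t := by
        simpa using (hasDerivAt_pow 2 t)
      have hd : HasDerivAt
          (fun s : ℝ => (1/2 * ⟪P v, v⟫) * s ^ 2 + ⟪P v, x⟫ * s + 1/2 * ⟪P x, x⟫)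
          ((1/2 * ⟪P v, v⟫) * (2 * t) + ⟪P v, x⟫) t :=
        (((h1.const_mul (1/2 * ⟪P v, v⟫)).add
          (((hasDerivAt_id t).const_mul ⟪P v, x⟫).congr_deriv (by ring))).add_const _)
      convert hd using 1
      simp only [map_add, map_smul, inner_add_left, inner_add_right,
        real_inner_smul_left, real_inner_smul_right]
      rw [hsym x v]; ring
    have haff : HasDerivAt (fun t : ℝ => P (x + t • v) + q) (P v) t := by
      have h2 : HasDerivAt (fun t : ℝ => P (x + t • v)) (P v) t := by
        have := (P.hasFDerivAt.comp t hline.hasFDerivAt).hasDerivAt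
        simp only [Function.comp_def, ContinuousLinearMap.coe_comp',
          ContinuousLinearMap.smulRight_apply, ContinuousLinearMap.one_apply,
          one_smul, ContinuousLinearMap.toSpanSingleton_apply] at this
        exact this
      simpa using h2.add_const q
    have hq2 : HasDerivAt (fun t : ℝ => f₂ (P (x + t • v) + q))
        (⟪S₂ (P (x + t • v) + q), P v⟫) t := by
      have := (hf₂ (P (x + t • v) + q)).hasFDerivAt.comp_hasDerivAt t haff
      simp [InnerProductSpace.toDual_apply_apply] at this ⊢
      exact this
    have hsub := hq1.sub hq2
    simp [hg, hF] at hsub ⊢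
    exact hsub
  -- monotonicity of the derivative
  have hkey : ‖P v‖ ^ 2 ≤ ⟪P v, v⟫ := key_ineq_s8 P hPsa hPne hPpsd v
  have hmono : Monotone (fun t : ℝ => ⟪P (x + t • v), v⟫ - ⟪S₂ (P (x + t • v) + q), P v⟫) := by
    intro s t hst
    set us := P (x + s • v) + q with hus
    set ut := P (x + t • v) + q with hut
    have hlin : (x + t • v) - (x + s • v) = (t - s) • v := by module
    have hdiff : ut - us = (t - s) • P v := by
      calc ut - us = P ((x + t • v) - (x + s • v)) := by rw [hut, hus, map_sub]; abel
        _ = (t - s) • P v := by rw [hlin, map_smul]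
    have h1 : ⟪P (x + t • v), v⟫ - ⟪P (x + s • v), v⟫ = (t - s) * ⟪P v, v⟫ := by
      rw [← inner_sub_left, ← map_sub, hlin, map_smul, real_inner_smul_left]
    have h2 : ⟪S₂ ut, P v⟫ - ⟪S₂ us, P v⟫ ≤ (t - s) * ⟪P v, v⟫ := by
      calc ⟪S₂ ut, P v⟫ - ⟪S₂ us, P v⟫ = ⟪S₂ ut - S₂ us, P v⟫ := (inner_sub_left _ _ _).symm
        _ ≤ ‖S₂ ut - S₂ us‖ * ‖P v‖ := real_inner_le_norm _ _
        _ ≤ ‖ut - us‖ * ‖P v‖ := by gcongr; exact hS₂ _ _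
        _ = (t - s) * ‖P v‖ ^ 2 := by
            rw [hdiff, norm_smul, Real.norm_eq_abs, abs_of_nonneg (by linarith), sq]; ring
        _ ≤ (t - s) * ⟪P v, v⟫ := by
            have : (0:ℝ) ≤ t - s := by linarith
            exact mul_le_mul_of_nonneg_left hkey this
    dsimp only
    rw [← hus, ← hut]
    linarith [h1, h2]
  have hdiffg : Differentiable ℝ g := fun t => (hderiv t).differentiableAt
  have hderiv_eq : deriv g = fun t : ℝ =>
      ⟪P (x + t • v), v⟫ - ⟪S₂ (P (x + t • v) + q), P v⟫ :=
    funext fun t => (hderiv t).deriv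
  have hgc : ConvexOn ℝ Set.univ g := by
    apply Monotone.convexOn_univ_of_deriv hdiffg
    rw [hderiv_eq]; exact hmono
  have h0 : g 0 = F x := by simp [hg]
  have h1 : g 1 = F y := by simp [hg, hv]
  have hcomb : x + b • v = a • x + b • y := by
    have ha' : a = 1 - b := by linarith
    rw [hv, ha']; module
  have := hgc.2 (Set.mem_univ (0:ℝ)) (Set.mem_univ (1:ℝ)) ha hb hab
  simp only [smul_eq_mul, mul_zero, mul_one, zero_add] at this
  calc F (a • x + b • y) = g b := by rw [← hcomb]
    _ ≤ a * g 0 + b * g 1 := this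
    _ = a * F x + b * F y := by rw [h0, h1]
end

section
/- Under the envelope setup with P self-adjoint nonexpansive and nonsingular, the set of stationary points {x : ∇F(x) = 0} of the envelope F(x) = ½⟨Px,x⟩ - f₂(Px+q) equals the fixed-point set {x : S₂(Px+q) = x} of S₂∘S₁. If moreover P is positive definite, this set also equals the set of global minimizers of F. -/
open scoped RealInnerProductSpace

private lemma descent_aux_s9 {n : ℕ} (f₂ : EuclideanSpace ℝ (Fin n) → ℝ)
    (S₂ : EuclideanSpace ℝ (Fin n) → EuclideanSpace ℝ (Fin n))
    (hf₂ : ∀ x, HasGradientAt f₂ (S₂ x) x)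
    (hS₂ : ∀ x y, ‖S₂ x - S₂ y‖ ≤ ‖x - y‖) (u v : EuclideanSpace ℝ (Fin n)) :
    f₂ v ≤ f₂ u + ⟪S₂ u, v - u⟫ + 1/2 * ‖v - u‖^2 := by
  set d := v - u with hd
  have line : ∀ t : ℝ, HasDerivAt (fun t : ℝ => u + t • d) d t := by
    intro t
    simpa using ((hasDerivAt_id t).smul_const d).const_add u
  have hφ : ∀ t : ℝ, HasDerivAt (fun t : ℝ => f₂ (u + t • d)) ⟪S₂ (u + t • d), d⟫ t := by
    intro t
    have := ((hf₂ (u + t • d)).hasFDerivAt.comp_hasDerivAt t (line t))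
    simpa [InnerProductSpace.toDual_apply_apply, Function.comp_def] using this
  set ψ : ℝ → ℝ := fun t => f₂ (u + t • d) - t * ⟪S₂ u, d⟫ - t^2/2 * ‖d‖^2 with hψ
  have hψ' : ∀ t : ℝ, HasDerivAt ψ (⟪S₂ (u + t • d), d⟫ - ⟪S₂ u, d⟫ - t * ‖d‖^2) t := by
    intro t
    have h2 : HasDerivAt (fun t : ℝ => t * ⟪S₂ u, d⟫) ⟪S₂ u, d⟫ t := hasDerivAt_mul_const _
    have h3 : HasDerivAt (fun t : ℝ => t^2/2 * ‖d‖^2) (t * ‖d‖^2) t := by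
      have := ((hasDerivAt_pow 2 t).div_const 2).mul_const (‖d‖^2)
      refine this.congr_deriv ?_
      norm_num
    exact ((hφ t).sub h2).sub h3
  have hnonpos : ∀ t ∈ Set.Ioo (0:ℝ) 1, deriv ψ t ≤ 0 := by
    intro t ht
    rw [(hψ' t).deriv]
    have h1 : ⟪S₂ (u + t • d), d⟫ - ⟪S₂ u, d⟫ = ⟪S₂ (u + t • d) - S₂ u, d⟫ := by
      rw [inner_sub_left]
    have h2 : ⟪S₂ (u + t • d) - S₂ u, d⟫ ≤ ‖S₂ (u + t • d) - S₂ u‖ * ‖d‖ :=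
      real_inner_le_norm _ _
    have h3 : ‖S₂ (u + t • d) - S₂ u‖ ≤ ‖(u + t • d) - u‖ := hS₂ _ _
    have h4 : ‖(u + t • d) - u‖ = t * ‖d‖ := by
      simp [norm_smul, abs_of_pos ht.1]
    nlinarith [norm_nonneg d, mul_le_mul_of_nonneg_right h3 (norm_nonneg d),
      mul_le_mul_of_nonneg_right (le_of_lt ht.1) (mul_nonneg (norm_nonneg d) (norm_nonneg d))]
  have hcont : ContinuousOn ψ (Set.Icc 0 1) :=
    (fun t _ => ((hψ' t).differentiableAt.continuousAt.continuousWithinAt))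
  have hdiff : DifferentiableOn ℝ ψ (Set.Ioo 0 1) :=
    fun t _ => (hψ' t).differentiableAt.differentiableWithinAt
  have hanti : AntitoneOn ψ (Set.Icc 0 1) := by
    apply antitoneOn_of_deriv_nonpos (convex_Icc 0 1) hcont
    · rwa [interior_Icc]
    · rwa [interior_Icc]
  have key : ψ 1 ≤ ψ 0 := hanti (by norm_num) (by norm_num) (by norm_num)
  have e1 : u + (1:ℝ) • d = v := by rw [one_smul, hd]; abel
  have e0 : u + (0:ℝ) • d = u := by simp
  simp only [hψ, e1, e0] at key
  nlinarith [key]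

private lemma opineq_aux {n : ℕ} (P : EuclideanSpace ℝ (Fin n) →L[ℝ] EuclideanSpace ℝ (Fin n))
    (hPsa : ∀ x y, ⟪P x, y⟫ = ⟪x, P y⟫) (hPne : ∀ x, ‖P x‖ ≤ ‖x‖)
    (hpos : ∀ x, 0 ≤ ⟪P x, x⟫) (x : EuclideanSpace ℝ (Fin n)) :
    ‖P x‖^2 ≤ ⟪P x, x⟫ := by
  have cs : ∀ y, ⟪P x, y⟫^2 ≤ ⟪P x, x⟫ * ⟪P y, y⟫ := by
    intro y
    have hq : ∀ t : ℝ, 0 ≤ ⟪P y, y⟫ * (t * t) + (2 * ⟪P x, y⟫) * t + ⟪P x, x⟫ := by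
      intro t
      have h := hpos (x + t • y)
      have expand : ⟪P (x + t • y), x + t • y⟫
          = ⟪P x, x⟫ + t * ⟪P x, y⟫ + t * ⟪P y, x⟫ + (t * t) * ⟪P y, y⟫ := by
        simp only [map_add, map_smul, inner_add_left, inner_add_right,
          inner_smul_left, inner_smul_right, RCLike.conj_to_real]
        ring
      have hsym : ⟪P y, x⟫ = ⟪P x, y⟫ := by
        rw [hPsa y x, real_inner_comm]
      rw [expand, hsym] at h
      linarith
    have hdis := discrim_le_zero hq
    rw [discrim] at hdis
    nlinarith
  rcases eq_or_ne (P x) 0 with h0 | h0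
  · simp [h0, hpos x]
  · have hcs := cs (P x)
    have h1 : ⟪P x, P x⟫ = ‖P x‖^2 := real_inner_self_eq_norm_sq _
    have h2 : ⟪P (P x), P x⟫ ≤ ‖P x‖^2 := by
      calc ⟪P (P x), P x⟫ ≤ ‖P (P x)‖ * ‖P x‖ := real_inner_le_norm _ _
        _ ≤ ‖P x‖ * ‖P x‖ := mul_le_mul_of_nonneg_right (hPne _) (norm_nonneg _)
        _ = ‖P x‖^2 := by ring
    have hp : 0 < ‖P x‖ := norm_pos_iff.mpr h0
    have hpp : 0 ≤ ⟪P x, x⟫ := hpos x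
    nlinarith [hcs, h1, h2, hp, hpp]

private lemma gradF_aux {n : ℕ} (P : EuclideanSpace ℝ (Fin n) →L[ℝ] EuclideanSpace ℝ (Fin n))
    (hPsa : ∀ x y, ⟪P x, y⟫ = ⟪x, P y⟫)
    (q : EuclideanSpace ℝ (Fin n))
    (f₂ : EuclideanSpace ℝ (Fin n) → ℝ)
    (S₂ : EuclideanSpace ℝ (Fin n) → EuclideanSpace ℝ (Fin n))
    (hf₂ : ∀ x, HasGradientAt f₂ (S₂ x) x)
    (F : EuclideanSpace ℝ (Fin n) → ℝ)
    (hF : ∀ x, F x = 1/2 * ⟪P x, x⟫ - f₂ (P x + q)) (x : EuclideanSpace ℝ (Fin n)) :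
    HasFDerivAt F ((InnerProductSpace.toDual ℝ _) (P (x - S₂ (P x + q)))) x := by
  have hFe : F = fun x => 1/2 * ⟪P x, x⟫ - f₂ (P x + q) := funext hF
  rw [hFe]
  have h1 : HasFDerivAt (fun x => ⟪P x, x⟫)
      ((fderivInnerCLM ℝ (P x, x)).comp ((P : _ →L[ℝ] _).prod (ContinuousLinearMap.id ℝ _))) x :=
    HasFDerivAt.inner ℝ (P.hasFDerivAt) (hasFDerivAt_id x)
  have haff : HasFDerivAt (fun x => P x + q) (P : _ →L[ℝ] _) x := P.hasFDerivAt.add_const q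
  have h2 : HasFDerivAt (fun x => f₂ (P x + q))
      (((InnerProductSpace.toDual ℝ _) (S₂ (P x + q))).comp (P : _ →L[ℝ] _)) x :=
    ((hf₂ (P x + q)).hasFDerivAt).comp x haff
  have h3 := (h1.const_mul (1/2 : ℝ)).sub h2
  refine h3.congr_fderiv (Eq.symm ?_)
  apply ContinuousLinearMap.ext
  intro v
  simp only [ContinuousLinearMap.sub_apply, ContinuousLinearMap.smul_apply,
    ContinuousLinearMap.comp_apply, ContinuousLinearMap.prod_apply,
    ContinuousLinearMap.coe_id', id_eq, fderivInnerCLM_apply,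
    InnerProductSpace.toDual_apply_apply, smul_eq_mul]
  have e1 : ⟪S₂ (P x + q), P v⟫ = ⟪P (S₂ (P x + q)), v⟫ := (hPsa _ _).symm
  have e2 : ⟪P v, x⟫ = ⟪P x, v⟫ := (hPsa v x).trans (real_inner_comm _ _)
  rw [map_sub, inner_sub_left, e1, e2]
  ring

theorem stmt9 {n : ℕ}
    (P : EuclideanSpace ℝ (Fin n) →L[ℝ] EuclideanSpace ℝ (Fin n))
    (hPsa : ∀ x y, ⟪P x, y⟫ = ⟪x, P y⟫) (hPne : ∀ x, ‖P x‖ ≤ ‖x‖)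
    (hPinj : Function.Injective P)
    (q : EuclideanSpace ℝ (Fin n))
    (f₂ : EuclideanSpace ℝ (Fin n) → ℝ)
    (S₂ : EuclideanSpace ℝ (Fin n) → EuclideanSpace ℝ (Fin n))
    (hf₂ : ∀ x, HasGradientAt f₂ (S₂ x) x)
    (hS₂ : Nonexpansive S₂)
    (F : EuclideanSpace ℝ (Fin n) → ℝ)
    (hF : ∀ x, F x = 1/2 * ⟪P x, x⟫ - f₂ (P x + q)) :
    {x | P (x - S₂ (P x + q)) = 0} = {x | S₂ (P x + q) = x} ∧
    ((∃ m > (0:ℝ), ∀ x, m * ‖x‖^2 ≤ ⟪P x, x⟫) →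
      {x | ∀ y, F x ≤ F y} = {x | S₂ (P x + q) = x}) := by
  have hset : {x | P (x - S₂ (P x + q)) = 0} = {x | S₂ (P x + q) = x} := by
    ext x
    simp only [Set.mem_setOf_eq]
    constructor
    · intro h
      have hz : x - S₂ (P x + q) = 0 := hPinj (by rw [h, map_zero])
      have := sub_eq_zero.mp hz
      exact this.symm
    · intro h
      rw [h]
      simp
  refine ⟨hset, ?_⟩
  rintro ⟨m, hm, hmx⟩
  have hpos : ∀ z, 0 ≤ ⟪P z, z⟫ := fun z =>
    le_trans (by positivity) (hmx z)
  ext x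
  simp only [Set.mem_setOf_eq]
  constructor
  · intro hmin
    have hloc : IsLocalMin F x := Filter.Eventually.of_forall hmin
    have hz := hloc.hasFDerivAt_eq_zero (gradF_aux P hPsa q f₂ S₂ hf₂ F hF x)
    have hPz : P (x - S₂ (P x + q)) = 0 := by
      apply (InnerProductSpace.toDual ℝ (EuclideanSpace ℝ (Fin n))).injective
      rw [hz, map_zero]
    have : x ∈ {x | P (x - S₂ (P x + q)) = 0} := hPz
    rw [hset] at this
    exact this
  · intro hfix y
    have hdes := descent_aux_s9 f₂ S₂ hf₂ hS₂ (P x + q) (P y + q)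
    rw [hfix] at hdes
    have hvu : (P y + q) - (P x + q) = P (y - x) := by rw [map_sub]; abel
    rw [hvu] at hdes
    set d := y - x with hd
    have hip : ⟪x, P d⟫ = ⟪P x, d⟫ := (hPsa x d).symm
    have hy : y = x + d := by rw [hd]; abel
    have expand : ⟪P y, y⟫ = ⟪P x, x⟫ + ⟪P x, d⟫ + ⟪P d, x⟫ + ⟪P d, d⟫ := by
      rw [hy]
      simp only [map_add, inner_add_left, inner_add_right]
      ring
    have hsym : ⟪P d, x⟫ = ⟪P x, d⟫ := (hPsa d x).trans (real_inner_comm _ _)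
    have key : ‖P d‖^2 ≤ ⟪P d, d⟫ := opineq_aux P hPsa hPne hpos d
    rw [hF x, hF y, expand, hsym]
    rw [hip] at hdes
    linarith
end

section
/- Let g: ℝⁿ → ℝ ∪ {∞} be proper, closed and convex and ρ > 0. Define r_{γg}(x) = γg(x) + ½‖x‖² and p²_{γg}(x) = 2 r*_{γg}(x) - ½‖x‖². Then p²_{ρ(g*∘(-Id))}(y) = -ρ² p²_{ρ⁻¹g}(-ρ⁻¹y) for all y ∈ ℝⁿ. -/
open scoped RealInnerProductSpace

/-- Fenchel conjugate of an extended-real-valued function. -/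
noncomputable def econj {n : ℕ} (g : EuclideanSpace ℝ (Fin n) → EReal)
    (y : EuclideanSpace ℝ (Fin n)) : EReal :=
  ⨆ x, ((⟪y, x⟫ : ℝ) : EReal) - g x

/-- `g` is proper: somewhere finite and never `-∞`. -/
def EProper {n : ℕ} (g : EuclideanSpace ℝ (Fin n) → EReal) : Prop :=
  (∃ x, g x ≠ ⊤) ∧ ∀ x, g x ≠ ⊥

/-- Convexity for extended-real-valued functions. -/
def EConvex {n : ℕ} (g : EuclideanSpace ℝ (Fin n) → EReal) : Prop :=
  ∀ x y : EuclideanSpace ℝ (Fin n), ∀ a b : ℝ, 0 ≤ a → 0 ≤ b → a + b = 1 →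
    g (a • x + b • y) ≤ (a : EReal) * g x + (b : EReal) * g y

/-- `p` is the proximal point `prox_{γ g}(z)`, i.e. it minimizes
`g(·) + ‖· - z‖²/(2γ)`. -/
def IsProx {n : ℕ} (g : EuclideanSpace ℝ (Fin n) → EReal) (γ : ℝ)
    (z p : EuclideanSpace ℝ (Fin n)) : Prop :=
  ∀ y, g p + ((‖p - z‖^2 / (2*γ) : ℝ) : EReal) ≤ g y + ((‖y - z‖^2 / (2*γ) : ℝ) : EReal)

/-- `r_{γg}(x) = γ g(x) + ½‖x‖²`. -/
noncomputable def rfun {n : ℕ} (g : EuclideanSpace ℝ (Fin n) → EReal) (γ : ℝ)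
    (x : EuclideanSpace ℝ (Fin n)) : EReal :=
  (γ : EReal) * g x + ((‖x‖^2 / 2 : ℝ) : EReal)

/-- `p²_{γg}(x) = 2 r*_{γg}(x) - ½‖x‖²`. -/
noncomputable def p2fun {n : ℕ} (g : EuclideanSpace ℝ (Fin n) → EReal) (γ : ℝ)
    (x : EuclideanSpace ℝ (Fin n)) : EReal :=
  (2 : EReal) * econj (rfun g γ) x - ((‖x‖^2 / 2 : ℝ) : EReal)


lemma lsc_exists_min {X : Type*} [TopologicalSpace X] {f : X → EReal} (hf : LowerSemicontinuous f)
    {K : Set X} (hK : IsCompact K) (hKc : IsClosed K)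
    (hne : K.Nonempty) : ∃ p ∈ K, ∀ u ∈ K, f p ≤ f u := by
  set m := sInf (f '' K) with hm
  by_cases hι : ∃ c : EReal, m < c
  · set S : {c : EReal // m < c} → Set X := fun c => K ∩ f ⁻¹' Set.Iic c.1 with hS
    have hSc : ∀ c, IsClosed (S c) := fun c => hKc.inter (hf.isClosed_preimage c.1)
    have hScomp : ∀ c, IsCompact (S c) := fun c => hK.inter_right (hf.isClosed_preimage c.1)
    have hSne : ∀ c, (S c).Nonempty := by
      rintro ⟨c, hc⟩
      rw [hm] at hc
      obtain ⟨a, ⟨x, hxK, rfl⟩, hac⟩ := sInf_lt_iff.1 hc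
      exact ⟨x, hxK, le_of_lt hac⟩
    have hdir : Directed (· ⊇ ·) S := by
      rintro ⟨c₁, h₁⟩ ⟨c₂, h₂⟩
      refine ⟨⟨min c₁ c₂, lt_min h₁ h₂⟩, ?_, ?_⟩
      · intro x hx
        obtain ⟨h1, h2⟩ := hx
        simp only [Set.mem_preimage, Set.mem_Iic] at h2 ⊢
        exact ⟨h1, h2.trans (min_le_left _ _)⟩
      · intro x hx
        obtain ⟨h1, h2⟩ := hx
        simp only [Set.mem_preimage, Set.mem_Iic] at h2 ⊢
        exact ⟨h1, h2.trans (min_le_right _ _)⟩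
    haveI : Nonempty {c : EReal // m < c} := ⟨⟨hι.choose, hι.choose_spec⟩⟩
    obtain ⟨p, hp⟩ := IsCompact.nonempty_iInter_of_directed_nonempty_isCompact_isClosed
      S hdir hSne hScomp hSc
    simp only [Set.mem_iInter] at hp
    have hpK : p ∈ K := (hp ⟨hι.choose, hι.choose_spec⟩).1
    refine ⟨p, hpK, fun u hu => ?_⟩
    have hfpm : f p ≤ m := by
      refine le_of_forall_gt_imp_ge_of_dense fun c hc => (hp ⟨c, hc⟩).2
    exact hfpm.trans (sInf_le ⟨u, hu, rfl⟩)
  · push_neg at hι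
    obtain ⟨x, hx⟩ := hne
    refine ⟨x, hx, fun u hu => ?_⟩
    calc f x ≤ ⊤ := le_top
    _ = m := (top_le_iff.1 (hι ⊤)).symm
    _ ≤ f u := sInf_le ⟨u, hu, rfl⟩


lemma lsc_add_cont {X : Type*} [TopologicalSpace X] {g : X → EReal} (hg : LowerSemicontinuous g)
    (hb : ∀ x, g x ≠ ⊥) {φ : X → ℝ} (hφ : Continuous φ) :
    LowerSemicontinuous fun u => g u + ((φ u : ℝ) : EReal) := by
  intro x c hc
  induction c using EReal.rec with
  | bot =>
    filter_upwards with u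
    exact bot_lt_iff_ne_bot.2 (by simp [EReal.add_eq_bot_iff, hb u])
  | coe c =>
    obtain ⟨a, ha, hac⟩ : ∃ a : ℝ, (a : EReal) < g x ∧ c < a + φ x := by
      rcases eq_or_ne (g x) ⊤ with hgx | hgx
      · exact ⟨c - φ x + 1, by rw [hgx]; exact EReal.coe_lt_top _, by linarith⟩
      · have hgx' := EReal.coe_toReal hgx (hb x)
        set r := (g x).toReal with hr
        have hcr : c < r + φ x := by
          have h2 : (c : EReal) < ((r + φ x : ℝ) : EReal) := by
            rw [EReal.coe_add, hgx']; exact hc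
          exact_mod_cast h2
        refine ⟨r - (r + φ x - c)/2, ?_, by linarith⟩
        rw [← hgx']
        exact_mod_cast (by linarith : r - (r + φ x - c)/2 < r)
    have h1 : ∀ᶠ u in nhds x, (a : EReal) < g u := hg x a ha
    have h2 : ∀ᶠ u in nhds x, c - a < φ u :=
      (hφ.tendsto x).eventually (eventually_gt_nhds (by linarith))
    filter_upwards [h1, h2] with u hu1 hu2
    calc (c : EReal) < ((a + φ u : ℝ) : EReal) := by exact_mod_cast by linarith
    _ = (a : EReal) + (φ u : EReal) := EReal.coe_add _ _
    _ ≤ g u + (φ u : EReal) := add_le_add_left hu1.le _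
  | top => exact absurd hc (by simp)

lemma rfun_sub_eq {γ : ℝ} (hγ : 0 < γ) (r s : ℝ) {a : EReal} (ha : a ≠ ⊥) :
    (r : EReal) - ((γ : EReal) * a + ((s : ℝ) : EReal)) = ((r - s : ℝ) : EReal) - (γ : EReal) * a := by
  induction a using EReal.rec with
  | bot => exact absurd rfl ha
  | coe t =>
    rw [← EReal.coe_mul, ← EReal.coe_add, ← EReal.coe_sub, ← EReal.coe_sub]
    norm_cast
    ring
  | top =>
    rw [EReal.coe_mul_top_of_pos hγ, EReal.top_add_coe, EReal.sub_top, EReal.sub_top]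

lemma iSup_eq_of {ι : Sort*} (f : ι → EReal) (v : EReal) (h1 : ∀ i, f i ≤ v)
    (h2 : ∃ i, f i = v) : ⨆ i, f i = v :=
  le_antisymm (iSup_le h1) (h2.elim fun i hi => hi ▸ le_iSup f i)

set_option maxHeartbeats 1600000 in
lemma exists_prox_min {n : ℕ} (g : EuclideanSpace ℝ (Fin n) → EReal)
    (hgp : EProper g) (hglsc : LowerSemicontinuous g) (hgc : EConvex g)
    (c : ℝ) (hc : 0 < c) (z : EuclideanSpace ℝ (Fin n)) :
    ∃ p, g p ≠ ⊤ ∧ ∀ u, g p + ((c * ‖p - z‖^2 : ℝ) : EReal)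
      ≤ g u + ((c * ‖u - z‖^2 : ℝ) : EReal) := by
  obtain ⟨⟨x₀, hx₀⟩, hb⟩ := hgp
  set c₀ := (g x₀).toReal with hc₀def
  have hc₀ : g x₀ = (c₀ : EReal) := (EReal.coe_toReal hx₀ (hb x₀)).symm
  -- min on unit ball around x₀
  obtain ⟨v₀, hv₀K, hv₀min⟩ := lsc_exists_min hglsc (isCompact_closedBall x₀ 1)
    Metric.isClosed_closedBall ⟨x₀, Metric.mem_closedBall_self zero_le_one⟩
  have hv₀top : g v₀ ≠ ⊤ := by
    intro h
    have := hv₀min x₀ (Metric.mem_closedBall_self zero_le_one)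
    rw [h, hc₀, top_le_iff] at this
    exact EReal.coe_ne_top _ this
  set m := (g v₀).toReal with hmdef
  have hm : g v₀ = (m : EReal) := (EReal.coe_toReal hv₀top (hb v₀)).symm
  set L := max (c₀ - m) 0 with hLdef
  have hL : 0 ≤ L := le_max_right _ _
  have hLcm : c₀ - m ≤ L := le_max_left _ _
  -- global affine-type lower bound
  have glb : ∀ u, ((c₀ - L * (1 + ‖u - x₀‖) : ℝ) : EReal) ≤ g u := by
    intro u
    rcases eq_or_ne (g u) ⊤ with hu | hu
    · rw [hu]; exact le_top
    have hgu : g u = ((g u).toReal : EReal) := (EReal.coe_toReal hu (hb u)).symm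
    set ru := (g u).toReal with hrudef
    rw [hgu, EReal.coe_le_coe_iff]
    set d := ‖u - x₀‖ with hddef
    have hd : 0 ≤ d := norm_nonneg _
    by_cases hd1 : d ≤ 1
    · have huK : u ∈ Metric.closedBall x₀ 1 := by
        rw [Metric.mem_closedBall, dist_eq_norm]; exact hd1
      have : (m : EReal) ≤ (ru : EReal) := by rw [← hm, ← hgu]; exact hv₀min u huK
      have hmru : m ≤ ru := EReal.coe_le_coe_iff.1 this
      nlinarith [mul_nonneg hL hd]
    · push_neg at hd1
      have hd0 : d ≠ 0 := by linarith
      set v := x₀ + d⁻¹ • (u - x₀) with hvdef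
      have hvconv : v = (1 - d⁻¹) • x₀ + d⁻¹ • u := by
        rw [hvdef, sub_smul, one_smul, smul_sub]; abel
      have hinv1 : d⁻¹ ≤ 1 := by
        rw [inv_le_one_iff₀]; right; linarith
      have hinv0 : 0 ≤ d⁻¹ := by positivity
      have hconv := hgc x₀ u (1 - d⁻¹) d⁻¹ (by linarith) hinv0 (by ring)
      rw [← hvconv, hc₀, hgu] at hconv
      have hconv' : g v ≤ (((1 - d⁻¹) * c₀ + d⁻¹ * ru : ℝ) : EReal) := by
        rw [EReal.coe_add, EReal.coe_mul, EReal.coe_mul]; exact hconv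
      have hvK : v ∈ Metric.closedBall x₀ 1 := by
        rw [Metric.mem_closedBall, dist_eq_norm]
        have : v - x₀ = d⁻¹ • (u - x₀) := by rw [hvdef]; abel
        rw [this, norm_smul, Real.norm_eq_abs, abs_of_nonneg hinv0, ← hddef,
          inv_mul_cancel₀ hd0]
      have hmv : (m : EReal) ≤ g v := by rw [← hm]; exact hv₀min v hvK
      have hmle : m ≤ (1 - d⁻¹) * c₀ + d⁻¹ * ru :=
        EReal.coe_le_coe_iff.1 (hmv.trans hconv')
      have h2 : d * m ≤ (d - 1) * c₀ + ru := by
        calc d * m ≤ d * ((1 - d⁻¹) * c₀ + d⁻¹ * ru) :=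
              mul_le_mul_of_nonneg_left hmle (by linarith)
        _ = (d - 1) * c₀ + ru := by field_simp
      have h3 : (c₀ - m) * d ≤ L * d := mul_le_mul_of_nonneg_right hLcm (by linarith)
      nlinarith
  -- the objective
  set φ : EuclideanSpace ℝ (Fin n) → ℝ := fun u => c * ‖u - z‖^2 with hφdef
  have hφcont : Continuous φ := by
    apply continuous_const.mul
    exact ((continuous_id.sub continuous_const).norm.pow 2)
  set f : EuclideanSpace ℝ (Fin n) → EReal := fun u => g u + ((φ u : ℝ) : EReal) with hfdef
  have hflsc : LowerSemicontinuous f := lsc_add_cont hglsc hb hφcont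
  set F₀ := c₀ + φ x₀ with hF₀def
  have hfx₀ : f x₀ = (F₀ : EReal) := by rw [hfdef]; simp only; rw [hc₀, ← EReal.coe_add]
  set s := ‖x₀ - z‖ with hsdef
  have hs : 0 ≤ s := norm_nonneg _
  set M := (|F₀ - c₀| + L * s + 2 * L + 1) / c with hMdef
  set R := s + max 1 M with hRdef
  have hR1 : (1:ℝ) ≤ max 1 M := le_max_left _ _
  have hRpos : 0 < R := by rw [hRdef]; linarith
  -- coercivity
  have hcoer : ∀ u, R < ‖u - x₀‖ → (F₀ : EReal) < f u := by
    intro u hu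
    set d := ‖u - x₀‖ with hddef
    set e := d - s with hedef
    have he1 : 1 ≤ e := by
      have : s + 1 ≤ s + max 1 M := by linarith
      rw [hedef]; rw [hRdef] at hu; linarith
    have heM : M ≤ e := by rw [hedef]; rw [hRdef] at hu; have := le_max_right 1 M; linarith
    have hne : e ≤ ‖u - z‖ := by
      have htri : d ≤ ‖u - z‖ + ‖z - x₀‖ := by
        calc d = ‖(u - z) + (z - x₀)‖ := by rw [hddef]; congr 1; abel
        _ ≤ ‖u - z‖ + ‖z - x₀‖ := norm_add_le _ _
      have : ‖z - x₀‖ = s := by rw [hsdef, norm_sub_rev]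
      rw [hedef]; linarith
    have hq : e^2 ≤ ‖u - z‖^2 := by nlinarith
    have hcM : c * M = |F₀ - c₀| + L * s + 2 * L + 1 := by
      rw [hMdef]; field_simp
    have habs : F₀ - c₀ ≤ |F₀ - c₀| := le_abs_self _
    have habs0 : 0 ≤ |F₀ - c₀| := abs_nonneg _
    have hkey : F₀ < c₀ - L * (1 + d) + c * ‖u - z‖^2 := by
      have he0 : (0:ℝ) ≤ e := by linarith
      have hX : (0:ℝ) ≤ |F₀ - c₀| + L * s + L + 1 := by
        have := mul_nonneg hL hs; linarith
      have h1 : e * (c * M) ≤ c * (e * e) := by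
        nlinarith [mul_nonneg (mul_nonneg hc.le he0) (by linarith : (0:ℝ) ≤ e - M)]
      have h2 : |F₀ - c₀| + L * s + L + 1 + e * L ≤ e * (c * M) := by
        rw [hcM]; nlinarith [mul_nonneg (by linarith : (0:ℝ) ≤ e - 1) hX]
      have h3 : c * (e * e) ≤ c * ‖u - z‖^2 := by nlinarith
      have hd : d = e + s := by rw [hedef]; ring
      nlinarith [h1, h2, h3, habs, mul_nonneg hL hs, hd]
    calc (F₀ : EReal) < ((c₀ - L * (1 + d) + c * ‖u - z‖^2 : ℝ) : EReal) :=
          EReal.coe_lt_coe_iff.2 hkey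
    _ = ((c₀ - L * (1 + d) : ℝ) : EReal) + ((c * ‖u - z‖^2 : ℝ) : EReal) := EReal.coe_add _ _
    _ ≤ g u + ((φ u : ℝ) : EReal) := add_le_add_left (glb u) _
  -- minimize on closed ball
  obtain ⟨p, hpK, hpmin⟩ := lsc_exists_min hflsc (isCompact_closedBall x₀ R)
    Metric.isClosed_closedBall ⟨x₀, Metric.mem_closedBall_self hRpos.le⟩
  have hglobal : ∀ u, f p ≤ f u := by
    intro u
    by_cases huK : u ∈ Metric.closedBall x₀ R
    · exact hpmin u huK
    · have : R < ‖u - x₀‖ := by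
        rw [Metric.mem_closedBall, dist_eq_norm, not_le] at huK; exact huK
      calc f p ≤ f x₀ := hpmin x₀ (Metric.mem_closedBall_self hRpos.le)
      _ = (F₀ : EReal) := hfx₀
      _ ≤ f u := (hcoer u this).le
  have hptop : g p ≠ ⊤ := by
    intro h
    have h1 : f p ≤ (F₀ : EReal) := hfx₀ ▸ hpmin x₀ (Metric.mem_closedBall_self hRpos.le)
    rw [hfdef] at h1
    simp only [h, EReal.top_add_coe] at h1
    simp at h1
  exact ⟨p, hptop, hglobal⟩

lemma econj_ne_bot {n : ℕ} {g : EuclideanSpace ℝ (Fin n) → EReal} (hgp : EProper g)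
    (v : EuclideanSpace ℝ (Fin n)) : econj g v ≠ ⊥ := by
  obtain ⟨⟨x₀, hx₀⟩, hb⟩ := hgp
  have hc : g x₀ = ((g x₀).toReal : EReal) := (EReal.coe_toReal hx₀ (hb x₀)).symm
  have h1 : ((⟪v, x₀⟫ - (g x₀).toReal : ℝ) : EReal) ≤ econj g v := by
    have : ((⟪v, x₀⟫ : ℝ) : EReal) - g x₀ = ((⟪v, x₀⟫ - (g x₀).toReal : ℝ) : EReal) := by
      rw [hc]; exact (EReal.coe_sub _ _).symm
    exact this ▸ le_iSup (fun x => ((⟪v, x⟫ : ℝ) : EReal) - g x) x₀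
  intro h
  rw [h, le_bot_iff] at h1
  exact EReal.coe_ne_bot _ h1

lemma prox_subgrad {n : ℕ} {g : EuclideanSpace ℝ (Fin n) → EReal}
    (hgc : EConvex g) (hb : ∀ x, g x ≠ ⊥) {c : ℝ} (hc : 0 < c)
    {z p : EuclideanSpace ℝ (Fin n)} (hp : g p ≠ ⊤)
    (hmin : ∀ u, g p + ((c * ‖p - z‖^2 : ℝ) : EReal) ≤ g u + ((c * ‖u - z‖^2 : ℝ) : EReal)) :
    ∀ u, (((g p).toReal + ⟪(2*c) • (z - p), u - p⟫ : ℝ) : EReal) ≤ g u := by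
  intro u
  set gp := (g p).toReal with hgpdef
  have hgp : g p = (gp : EReal) := (EReal.coe_toReal hp (hb p)).symm
  rcases eq_or_ne (g u) ⊤ with hu | hu
  · rw [hu]; exact le_top
  have hgu : g u = ((g u).toReal : EReal) := (EReal.coe_toReal hu (hb u)).symm
  set ru := (g u).toReal with hrudef
  rw [hgu, EReal.coe_le_coe_iff]
  set d := u - p with hddef
  -- key inequality for each t ∈ (0,1]
  have key : ∀ t : ℝ, 0 < t → t ≤ 1 → 0 ≤ ru - gp + 2*c*⟪p - z, d⟫ + c*t*‖d‖^2 := by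
    intro t ht0 ht1
    set pt := p + t • d with hptdef
    have hptconv : pt = (1 - t) • p + t • u := by
      rw [hptdef, hddef, sub_smul, one_smul, smul_sub]; abel
    have hconv := hgc p u (1 - t) t (by linarith) ht0.le (by ring)
    rw [← hptconv, hgp, hgu] at hconv
    have hconv' : g pt ≤ (((1 - t) * gp + t * ru : ℝ) : EReal) := by
      rw [EReal.coe_add, EReal.coe_mul, EReal.coe_mul]; exact hconv
    have hpttop : g pt ≠ ⊤ := fun h => by
      rw [h] at hconv'; exact EReal.coe_ne_top _ (top_le_iff.1 hconv')
    have hgpt : g pt = ((g pt).toReal : EReal) := (EReal.coe_toReal hpttop (hb pt)).symm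
    set rt := (g pt).toReal with hrtdef
    have hrt : rt ≤ (1 - t) * gp + t * ru := by
      rw [hgpt] at hconv'; exact EReal.coe_le_coe_iff.1 hconv'
    have hmin' : gp + c * ‖p - z‖^2 ≤ rt + c * ‖pt - z‖^2 := by
      have := hmin pt
      rw [hgp, hgpt, ← EReal.coe_add, ← EReal.coe_add] at this
      exact EReal.coe_le_coe_iff.1 this
    have hexp : ‖pt - z‖^2 = ‖p - z‖^2 + 2*t*⟪p - z, d⟫ + t^2*‖d‖^2 := by
      have h1 : pt - z = (p - z) + t • d := by rw [hptdef]; abel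
      rw [h1, norm_add_sq_real, real_inner_smul_right, norm_smul, Real.norm_eq_abs,
        abs_of_nonneg ht0.le, mul_pow]
      ring
    rw [hexp] at hmin'
    have h2 : 0 ≤ t * (ru - gp) + 2*c*t*⟪p - z, d⟫ + c*t^2*‖d‖^2 := by nlinarith
    have h3 := mul_le_mul_of_nonneg_left h2 (le_of_lt (inv_pos.2 ht0))
    have ht0' : t ≠ 0 := ht0.ne'
    calc (0:ℝ) = t⁻¹ * 0 := by ring
    _ ≤ t⁻¹ * (t * (ru - gp) + 2*c*t*⟪p - z, d⟫ + c*t^2*‖d‖^2) := h3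
    _ = ru - gp + 2*c*⟪p - z, d⟫ + c*t*‖d‖^2 := by field_simp
  -- pass to the limit t → 0
  have hfinal : 0 ≤ ru - gp + 2*c*⟪p - z, d⟫ := by
    by_contra hlt
    push_neg at hlt
    set S := ru - gp + 2*c*⟪p - z, d⟫ with hSdef
    rcases eq_or_ne (‖d‖^2) 0 with hd0 | hd0
    · have := key 1 one_pos le_rfl
      rw [hd0] at this; linarith
    · have hdpos : 0 < ‖d‖^2 := lt_of_le_of_ne (by positivity) (Ne.symm hd0)
      set t := min 1 (-S / (2*c*‖d‖^2)) with htdef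
      have htpos : 0 < t := lt_min one_pos (div_pos (by linarith) (by positivity))
      have ht1 : t ≤ 1 := min_le_left _ _
      have hts : t ≤ -S / (2*c*‖d‖^2) := min_le_right _ _
      have h4 := key t htpos ht1
      have h5 : c*t*‖d‖^2 ≤ -S/2 := by
        have := mul_le_mul_of_nonneg_right hts (by positivity : (0:ℝ) ≤ c*‖d‖^2)
        calc c*t*‖d‖^2 = t * (c*‖d‖^2) := by ring
        _ ≤ (-S / (2*c*‖d‖^2)) * (c*‖d‖^2) := this
        _ = -S/2 := by
            rw [div_mul_eq_mul_div, div_eq_div_iff (mul_pos (mul_pos two_pos hc) hdpos).ne' two_ne_zero]; ring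
      linarith
  have hinner : ⟪(2*c) • (z - p), d⟫ = -(2*c*⟪p - z, d⟫) := by
    rw [real_inner_smul_left]
    have : z - p = -(p - z) := by abel
    rw [this, inner_neg_left]
    ring
  linarith [hfinal, hinner]

lemma econj_rfun_eq {n : ℕ} (h : EuclideanSpace ℝ (Fin n) → EReal)
    (hhb : ∀ x, h x ≠ ⊥) {γ : ℝ} (hγ : 0 < γ) (y : EuclideanSpace ℝ (Fin n)) (v : ℝ)
    (hub : ∀ x, ((⟪y, x⟫ - ‖x‖^2/2 : ℝ) : EReal) - (γ : EReal) * h x ≤ ((v : ℝ) : EReal))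
    (hwit : ∃ x, ((⟪y, x⟫ - ‖x‖^2/2 : ℝ) : EReal) - (γ : EReal) * h x = ((v : ℝ) : EReal)) :
    econj (rfun h γ) y = ((v : ℝ) : EReal) := by
  simp only [econj, rfun]
  refine iSup_eq_of _ _ (fun x => ?_) ?_
  · rw [rfun_sub_eq hγ _ _ (hhb x)]; exact hub x
  · obtain ⟨x, hx⟩ := hwit
    exact ⟨x, by rw [rfun_sub_eq hγ _ _ (hhb x)]; exact hx⟩

lemma econj_fenchel {n : ℕ} {g : EuclideanSpace ℝ (Fin n) → EReal}
    (hb : ∀ x, g x ≠ ⊥) {w p : EuclideanSpace ℝ (Fin n)} {gp : ℝ} (hgp : g p = (gp : EReal))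
    (hsub : ∀ u, ((gp + ⟪w, u - p⟫ : ℝ) : EReal) ≤ g u) :
    econj g w = ((⟪w, p⟫ - gp : ℝ) : EReal) := by
  simp only [econj]
  refine iSup_eq_of _ _ (fun u => ?_) ⟨p, ?_⟩
  · calc ((⟪w, u⟫ : ℝ) : EReal) - g u
        ≤ ((⟪w, u⟫ : ℝ) : EReal) - ((gp + ⟪w, u - p⟫ : ℝ) : EReal) :=
          EReal.sub_le_sub le_rfl (hsub u)
    _ = ((⟪w, u⟫ - (gp + ⟪w, u - p⟫) : ℝ) : EReal) := (EReal.coe_sub _ _).symm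
    _ = ((⟪w, p⟫ - gp : ℝ) : EReal) := by
          rw [EReal.coe_eq_coe_iff, inner_sub_right]; ring
  · rw [hgp, ← EReal.coe_sub]

set_option maxHeartbeats 1600000 in
theorem stmt12 {n : ℕ} (g : EuclideanSpace ℝ (Fin n) → EReal)
    (hgp : EProper g) (hglsc : LowerSemicontinuous g) (hgc : EConvex g)
    (ρ : ℝ) (hρ : 0 < ρ) :
    ∀ y, p2fun (fun μ => econj g (-μ)) ρ y =
      -(((ρ^2 : ℝ) : EReal) * p2fun g ρ⁻¹ (-(ρ⁻¹ • y))) := by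
  intro y
  have hb := hgp.2
  set z := -(ρ⁻¹ • y) with hzdef
  obtain ⟨p, hptop, hmin⟩ := exists_prox_min g hgp hglsc hgc (ρ/2) (by linarith) z
  set gp := (g p).toReal with hgpdef
  have hgpe : g p = (gp : EReal) := (EReal.coe_toReal hptop (hb p)).symm
  have hsub := prox_subgrad hgc hb (by linarith : (0:ℝ) < ρ/2) hptop hmin
  set w := (2*(ρ/2)) • (z - p) with hwdef
  have hρz : ρ • z = -y := by
    rw [hzdef, smul_neg, smul_smul, mul_inv_cancel₀ hρ.ne', one_smul]
  have hw : w = -y - ρ • p := by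
    rw [hwdef, show (2*(ρ/2)) = ρ by ring, smul_sub, hρz]
  have hfen : econj g w = ((⟪w, p⟫ - gp : ℝ) : EReal) := econj_fenchel hb hgpe hsub
  have hhb : ∀ x : EuclideanSpace ℝ (Fin n), econj g (-x) ≠ ⊥ := fun x => econj_ne_bot hgp (-x)
  set xs := ρ • p + y with hxsdef
  have hxsw : -xs = w := by rw [hw, hxsdef]; abel
  -- value of A
  have hA : econj (rfun (fun μ => econj g (-μ)) ρ) y = ((‖xs‖^2/2 + ρ * gp : ℝ) : EReal) := by
    refine econj_rfun_eq _ hhb hρ y _ (fun x => ?_) ⟨xs, ?_⟩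
    · have hlow : ((⟪-x, p⟫ - gp : ℝ) : EReal) ≤ econj g (-x) := by
        have he : ((⟪-x, p⟫ : ℝ) : EReal) - g p = ((⟪-x, p⟫ - gp : ℝ) : EReal) := by
          rw [hgpe, ← EReal.coe_sub]
        exact he ▸ le_iSup (fun u => ((⟪-x, u⟫ : ℝ) : EReal) - g u) p
      have hmul : ((ρ * (⟪-x, p⟫ - gp) : ℝ) : EReal) ≤ (ρ : EReal) * econj g (-x) := by
        rw [EReal.coe_mul]
        exact mul_le_mul_of_nonneg_left hlow (by exact_mod_cast hρ.le)
      calc ((⟪y, x⟫ - ‖x‖^2/2 : ℝ) : EReal) - (ρ : EReal) * econj g (-x)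
          ≤ ((⟪y, x⟫ - ‖x‖^2/2 : ℝ) : EReal) - ((ρ * (⟪-x, p⟫ - gp) : ℝ) : EReal) :=
            EReal.sub_le_sub le_rfl hmul
      _ = ((⟪y, x⟫ - ‖x‖^2/2 - ρ * (⟪-x, p⟫ - gp) : ℝ) : EReal) := (EReal.coe_sub _ _).symm
      _ ≤ ((‖xs‖^2/2 + ρ * gp : ℝ) : EReal) := by
            rw [EReal.coe_le_coe_iff]
            have e1 : ⟪xs, x⟫ = ρ * ⟪p, x⟫ + ⟪y, x⟫ := by
              rw [hxsdef, inner_add_left, real_inner_smul_left]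
            have e3 : ‖xs - x‖^2 = ‖xs‖^2 - 2*⟪xs, x⟫ + ‖x‖^2 := norm_sub_sq_real xs x
            have e2 : (0:ℝ) ≤ ‖xs - x‖^2 := sq_nonneg _
            have e4 : ⟪-x, p⟫ = -⟪x, p⟫ := inner_neg_left x p
            have e5 : ⟪p, x⟫ = ⟪x, p⟫ := real_inner_comm x p
            nlinarith [e1, e2, e3, e4, e5]
    · have hfen' : econj g (-xs) = ((⟪w, p⟫ - gp : ℝ) : EReal) := by rw [hxsw]; exact hfen
      rw [hfen', ← EReal.coe_mul, ← EReal.coe_sub, EReal.coe_eq_coe_iff]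
      have f1 : ⟪w, p⟫ = -⟪xs, p⟫ := by rw [← hxsw, inner_neg_left]
      have f2 : ⟪xs, p⟫ = ⟪p, xs⟫ := real_inner_comm p xs
      have f3 : ‖xs‖^2 = ρ * ⟪p, xs⟫ + ⟪y, xs⟫ := by
        rw [← real_inner_self_eq_norm_sq, hxsdef, inner_add_left, real_inner_smul_left]
      rw [f1, f2]
      linarith [f3]
  -- value of B
  have hB : econj (rfun g ρ⁻¹) z
      = ((‖z‖^2/2 - ρ⁻¹ * (gp + (ρ/2) * ‖p - z‖^2) : ℝ) : EReal) := by
    refine econj_rfun_eq _ hb (inv_pos.2 hρ) z _ (fun u => ?_) ⟨p, ?_⟩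
    · rcases eq_or_ne (g u) ⊤ with hu | hu
      · rw [hu, EReal.coe_mul_top_of_pos (inv_pos.2 hρ), EReal.sub_top]
        exact bot_le
      · have hgu : g u = ((g u).toReal : EReal) := (EReal.coe_toReal hu (hb u)).symm
        set ru := (g u).toReal with hrudef
        rw [hgu, ← EReal.coe_mul, ← EReal.coe_sub, EReal.coe_le_coe_iff]
        have hminr : gp + (ρ/2) * ‖p - z‖^2 ≤ ru + (ρ/2) * ‖u - z‖^2 := by
          have h0 := hmin u
          rw [hgpe, hgu, ← EReal.coe_add, ← EReal.coe_add] at h0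
          exact EReal.coe_le_coe_iff.1 h0
        rw [← mul_le_mul_iff_right₀ hρ]
        have h8 : ρ * (ρ⁻¹ * ru) = ru := by field_simp
        have h9 : ρ * (ρ⁻¹ * (gp + (ρ/2) * ‖p - z‖^2)) = gp + (ρ/2) * ‖p - z‖^2 := by
          field_simp
        have e3' : ρ * ‖u - z‖^2 = ρ * ‖u‖^2 - 2*ρ*⟪u, z⟫ + ρ*‖z‖^2 := by
          rw [norm_sub_sq_real]; ring
        have e5' : ρ * ⟪u, z⟫ = ρ * ⟪z, u⟫ := by rw [real_inner_comm]
        nlinarith [hminr, h8, h9, e3', e5']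
    · rw [hgpe, ← EReal.coe_mul, ← EReal.coe_sub, EReal.coe_eq_coe_iff]
      rw [norm_sub_sq_real, real_inner_comm p z]
      field_simp
      ring
  -- final computation
  simp only [p2fun]
  rw [hA, hB]
  have hnz : ‖z‖ = ρ⁻¹ * ‖y‖ := by
    rw [hzdef, norm_neg, norm_smul, Real.norm_eq_abs, abs_of_pos (inv_pos.2 hρ)]
  have hnxs : ‖xs‖ = ρ * ‖p - z‖ := by
    have : xs = ρ • (p - z) := by rw [smul_sub, hρz, hxsdef]; abel
    rw [this, norm_smul, Real.norm_eq_abs, abs_of_pos hρ]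
  have h2e : (2 : EReal) = ((2:ℝ) : EReal) := by norm_cast
  rw [h2e, ← EReal.coe_mul, ← EReal.coe_sub, ← EReal.coe_mul, ← EReal.coe_sub, ← EReal.coe_mul,
    ← EReal.coe_neg, EReal.coe_eq_coe_iff, hnz, hnxs]
  field_simp
  ring
end

section
/- Let f, g: ℝⁿ → ℝ ∪ {∞} be proper, closed, convex, let ρ > 0, γ = ρ⁻¹, α ∈ (0,1), and suppose z⁰ = ρ⁻¹v⁰. Define v^{k+1} = (1-α)v^k + α R_{ρ(g*∘(-Id))}(R_{ρf*}(v^k)) and z^{k+1} = (1-α)z^k + α R_{γg}(R_{γf}(z^k)). Then z^k = ρ⁻¹v^k for all k ≥ 0. -/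
open scoped RealInnerProductSpace

section aux
variable {n : ℕ}
local notation "E" => EuclideanSpace ℝ (Fin n)

lemma prox_subgrad_s13 (f : E → EReal) (hp : EProper f) (hc : EConvex f)
    (γ : ℝ) (hγ : 0 < γ) (z p : E) (h : IsProx f γ z p) :
    ∃ c : ℝ, f p = (c : EReal) ∧
      ∀ x, ((c + ⟪γ⁻¹ • (z - p), x - p⟫ : ℝ) : EReal) ≤ f x := by
  obtain ⟨⟨x₀, hx₀⟩, hbot⟩ := hp
  have hfp_ne_top : f p ≠ ⊤ := by
    intro htop
    have h0 := h x₀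
    rw [htop, EReal.top_add_coe] at h0
    lift f x₀ to ℝ using ⟨hx₀, hbot x₀⟩ with d
    rw [← EReal.coe_add] at h0
    exact EReal.coe_ne_top _ (top_le_iff.mp h0)
  set c := (f p).toReal with hcdef
  have hfp : f p = (c : EReal) := (EReal.coe_toReal hfp_ne_top (hbot p)).symm
  refine ⟨c, hfp, fun x => ?_⟩
  by_cases hx : f x = ⊤
  · rw [hx]; exact le_top
  lift f x to ℝ using ⟨hx, hbot x⟩ with d hd
  rw [EReal.coe_le_coe_iff]
  -- key real inequality for each t ∈ (0,1]
  have key : ∀ t : ℝ, 0 < t → t ≤ 1 →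
      c + ⟪γ⁻¹ • (z - p), x - p⟫ ≤ d + t * (‖x - p‖^2 / (2*γ)) := by
    intro t ht0 ht1
    have hy := h (p + t • (x - p))
    have hconv := hc p x (1 - t) t (by linarith) (le_of_lt ht0) (by ring)
    have heq : (1 - t) • p + t • x = p + t • (x - p) := by
      rw [smul_sub]; module
    rw [heq, hfp, ← hd] at hconv
    rw [hfp] at hy
    have hconv' : f (p + t • (x - p)) ≤ (((1-t)*c + t*d : ℝ) : EReal) := by
      calc f (p + t • (x - p)) ≤ ((1-t : ℝ) : EReal) * (c:ℝ) + ((t:ℝ):EReal) * (d:ℝ) := hconv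
      _ = (((1-t)*c + t*d : ℝ) : EReal) := by norm_cast
    have hy2 : ((c + ‖p - z‖^2 / (2*γ) : ℝ) : EReal) ≤
        (((1-t)*c + t*d + ‖(p + t • (x - p)) - z‖^2 / (2*γ) : ℝ) : EReal) := by
      push_cast
      calc ((c:EReal) + (‖p - z‖^2 / (2*γ) : ℝ)) ≤ f (p + t • (x - p)) + ((‖(p + t • (x - p)) - z‖^2 / (2*γ) : ℝ):EReal) := hy
      _ ≤ (((1-t)*c + t*d : ℝ) : EReal) + ((‖(p + t • (x - p)) - z‖^2 / (2*γ) : ℝ):EReal) := by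
          exact add_le_add_left hconv' _
      _ = _ := by push_cast; ring
    rw [EReal.coe_le_coe_iff] at hy2
    have hnorm : ‖(p + t • (x - p)) - z‖^2
        = ‖p - z‖^2 + 2 * (t * ⟪p - z, x - p⟫) + t^2 * ‖x - p‖^2 := by
      have : (p + t • (x - p)) - z = (p - z) + t • (x - p) := by abel
      rw [this, norm_add_sq_real, real_inner_smul_right, norm_smul]
      simp [abs_of_pos ht0]
      ring
    have hinner : ⟪γ⁻¹ • (z - p), x - p⟫ = γ⁻¹ * ⟪z - p, x - p⟫ := real_inner_smul_left _ _ _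
    have hzp : ⟪z - p, x - p⟫ = - ⟪p - z, x - p⟫ := by
      rw [show z - p = -(p - z) by abel, inner_neg_left]
    rw [hnorm] at hy2
    rw [hinner, hzp]
    set A := ‖p - z‖^2 with hA
    set B := ‖x - p‖^2 with hB
    set I := (⟪p - z, x - p⟫ : ℝ) with hI
    have e1 : (A + 2*(t*I) + t^2*B)/(2*γ) = A/(2*γ) + t * ((2*I + t*B)/(2*γ)) := by
      field_simp; ring
    rw [e1] at hy2
    have hy4 : c ≤ d + (2*I+t*B)/(2*γ) := by
      have h5 : t*c ≤ t*(d + (2*I+t*B)/(2*γ)) := by nlinarith [hy2]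
      exact le_of_mul_le_mul_left h5 ht0
    have e2 : (2*I + t*B)/(2*γ) = I/γ + t*(B/(2*γ)) := by field_simp
    have e3 : γ⁻¹ * (-I) = -(I/γ) := by field_simp
    nlinarith [hy4, e2, e3]
  -- pass to the limit t → 0
  have hK : 0 ≤ ‖x - p‖^2 / (2*γ) := by positivity
  refine le_of_forall_pos_le_add ?_
  intro ε hε
  set K := ‖x - p‖^2 / (2*γ)
  rcases eq_or_lt_of_le hK with hK0 | hK0
  · have := key 1 one_pos le_rfl
    rw [← hK0] at this; linarith
  · have ht0 : 0 < min 1 (ε / K) := lt_min one_pos (div_pos hε hK0)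
    have := key (min 1 (ε / K)) ht0 (min_le_left _ _)
    have h2 : min 1 (ε / K) * K ≤ ε := by
      calc min 1 (ε / K) * K ≤ (ε / K) * K := by
            apply mul_le_mul_of_nonneg_right (min_le_right _ _) (le_of_lt hK0)
      _ = ε := by field_simp
    linarith
end aux

section aux2
variable {n : ℕ}
local notation "E" => EuclideanSpace ℝ (Fin n)

lemma first_order_unique (F : E → EReal) (ρ : ℝ) (hρ : 0 < ρ) (v u q : E) (c : ℝ)
    (hu : F u = (c : EReal))
    (hsub : ∀ y, ((c + ⟪ρ⁻¹ • (v - u), y - u⟫ : ℝ) : EReal) ≤ F y)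
    (hq : IsProx F ρ v q) : q = u := by
  have h1 := hq u
  rw [hu] at h1
  have hFq_ne_top : F q ≠ ⊤ := by
    intro htop
    rw [htop, EReal.top_add_coe] at h1
    rw [← EReal.coe_add] at h1
    exact EReal.coe_ne_top _ (top_le_iff.mp h1)
  have hFq_ne_bot : F q ≠ ⊥ := by
    intro hbotq
    have := hsub q
    rw [hbotq] at this
    exact EReal.coe_ne_bot _ (le_bot_iff.mp this)
  lift F q to ℝ using ⟨hFq_ne_top, hFq_ne_bot⟩ with d hd
  rw [← EReal.coe_add, ← EReal.coe_add, EReal.coe_le_coe_iff] at h1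
  have h2 := hsub q
  rw [← hd, EReal.coe_le_coe_iff] at h2
  have hin : ⟪ρ⁻¹ • (v - u), q - u⟫ = ρ⁻¹ * ⟪v - u, q - u⟫ := real_inner_smul_left _ _ _
  have hexp : ‖q - v‖^2 = ‖q - u‖^2 + 2 * ⟪q - u, u - v⟫ + ‖u - v‖^2 := by
    have : q - v = (q - u) + (u - v) := by abel
    rw [this, norm_add_sq_real]
  have hsym : ⟪v - u, q - u⟫ = - ⟪q - u, u - v⟫ := by
    rw [show v - u = -(u - v) by abel, inner_neg_left, real_inner_comm]
  have hnn : ‖q - u‖^2 ≤ 0 := by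
    rw [hin, hsym] at h2
    have hγ' : (0:ℝ) < 2 * ρ := by linarith
    have e1 : ‖q - v‖^2 / (2*ρ) = (‖q - u‖^2 + 2 * ⟪q - u, u - v⟫ + ‖u - v‖^2) / (2*ρ) := by
      rw [hexp]
    have e2 : ρ⁻¹ * -⟪q - u, u - v⟫ + 2 * ⟪q - u, u - v⟫ / (2*ρ) = 0 := by
      field_simp
      ring
    have e3 : ‖q - u‖^2 / (2*ρ) ≤ 0 := by
      rw [e1] at h1
      rw [add_div, add_div] at h1
      linarith [e2, h1, h2]
    have e4 := mul_le_mul_of_nonneg_right e3 hγ'.le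
    rwa [div_mul_cancel₀ _ (ne_of_gt hγ'), zero_mul] at e4
  have hsq : ‖q - u‖^2 = 0 := le_antisymm hnn (sq_nonneg _)
  have := norm_eq_zero.mp ((pow_eq_zero_iff two_ne_zero).mp hsq)
  exact sub_eq_zero.mp this

lemma conj_subgrad (f : E → EReal) (p s : E) (c : ℝ) (hp : f p = (c : EReal))
    (hsub : ∀ x, ((c + ⟪s, x - p⟫ : ℝ) : EReal) ≤ f x) :
    econj f s = ((⟪s, p⟫ - c : ℝ) : EReal) ∧
      ∀ y, (((⟪s, p⟫ - c) + ⟪p, y - s⟫ : ℝ) : EReal) ≤ econj f y := by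
  constructor
  · apply le_antisymm
    · apply iSup_le
      intro x
      have h1 := hsub x
      calc ((⟪s, x⟫ : ℝ) : EReal) - f x
          ≤ ((⟪s, x⟫ : ℝ) : EReal) - ((c + ⟪s, x - p⟫ : ℝ) : EReal) :=
            EReal.sub_le_sub le_rfl h1
        _ = ((⟪s, x⟫ - (c + ⟪s, x - p⟫) : ℝ) : EReal) := by
            rw [EReal.coe_sub]
        _ = ((⟪s, p⟫ - c : ℝ) : EReal) := by
            norm_cast
            rw [inner_sub_right]
            ring
    · have : ((⟪s, p⟫ - c : ℝ) : EReal) = ((⟪s, p⟫ : ℝ) : EReal) - f p := by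
        rw [hp, ← EReal.coe_sub]
      rw [this]
      exact le_iSup (fun x => ((⟪s, x⟫ : ℝ) : EReal) - f x) p
  · intro y
    have : (((⟪s, p⟫ - c) + ⟪p, y - s⟫ : ℝ) : EReal) = ((⟪y, p⟫ : ℝ) : EReal) - f p := by
      rw [hp, ← EReal.coe_sub]
      norm_cast
      rw [inner_sub_right, real_inner_comm p y, real_inner_comm p s]
      ring
    rw [this]
    exact le_iSup (fun x => ((⟪y, x⟫ : ℝ) : EReal) - f x) p
end aux2
section aux3
variable {n : ℕ}
local notation "E" => EuclideanSpace ℝ (Fin n)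

lemma moreau1 (f : E → EReal) (hp : EProper f) (hc : EConvex f) (ρ : ℝ) (hρ : 0 < ρ)
    (v p q : E) (hpf : IsProx f ρ⁻¹ (ρ⁻¹ • v) p) (hq : IsProx (econj f) ρ v q) :
    q = v - ρ • p := by
  obtain ⟨c, hfp, hsubg⟩ := prox_subgrad_s13 f hp hc ρ⁻¹ (inv_pos.mpr hρ) (ρ⁻¹ • v) p hpf
  have hs : (ρ⁻¹)⁻¹ • (ρ⁻¹ • v - p) = v - ρ • p := by
    rw [inv_inv, smul_sub, smul_smul, mul_inv_cancel₀ (ne_of_gt hρ), one_smul]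
  rw [hs] at hsubg
  obtain ⟨hval, hcsub⟩ := conj_subgrad f p (v - ρ • p) c hfp hsubg
  refine first_order_unique (econj f) ρ hρ v (v - ρ • p) q (⟪v - ρ • p, p⟫ - c) hval ?_ hq
  intro y
  have hslope : ρ⁻¹ • (v - (v - ρ • p)) = p := by
    rw [sub_sub_cancel, smul_smul, inv_mul_cancel₀ (ne_of_gt hρ), one_smul]
  rw [hslope]
  exact hcsub y

lemma moreau2 (g : E → EReal) (hp : EProper g) (hc : EConvex g) (ρ : ℝ) (hρ : 0 < ρ)
    (u p q : E) (hpg : IsProx g ρ⁻¹ (-(ρ⁻¹ • u)) p)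
    (hq : IsProx (fun μ => econj g (-μ)) ρ u q) :
    q = u + ρ • p := by
  obtain ⟨c, hgp, hsubg⟩ := prox_subgrad_s13 g hp hc ρ⁻¹ (inv_pos.mpr hρ) (-(ρ⁻¹ • u)) p hpg
  have hs : (ρ⁻¹)⁻¹ • (-(ρ⁻¹ • u) - p) = -u - ρ • p := by
    rw [inv_inv, smul_sub, smul_neg, smul_smul, mul_inv_cancel₀ (ne_of_gt hρ), one_smul]
  rw [hs] at hsubg
  obtain ⟨hval, hcsub⟩ := conj_subgrad g p (-u - ρ • p) c hgp hsubg
  have hq' := first_order_unique (fun μ => econj g (-μ)) ρ hρ u (-(-u - ρ • p)) q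
      (⟪-u - ρ • p, p⟫ - c) ?_ ?_ hq
  · rw [hq']; abel
  · show econj g (-(-(-u - ρ • p))) = _
    rw [neg_neg]; exact hval
  · intro y
    have hslope : ρ⁻¹ • (u - -(-u - ρ • p)) = -p := by
      have : u - -(-u - ρ • p) = -(ρ • p) := by abel
      rw [this, smul_neg, smul_smul, inv_mul_cancel₀ (ne_of_gt hρ), one_smul]
    rw [hslope]
    have hinner : ⟪(-p : E), y - -(-u - ρ • p)⟫ = ⟪p, -y - (-u - ρ • p)⟫ := by
      rw [inner_neg_left, show -y - (-u - ρ • p) = -(y - -(-u - ρ • p)) by abel,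
        inner_neg_right]
    rw [hinner]
    exact hcsub (-y)
end aux3

theorem stmt13 {n : ℕ} (f g : EuclideanSpace ℝ (Fin n) → EReal)
    (hfp : EProper f) (hflsc : LowerSemicontinuous f) (hfc : EConvex f)
    (hgp : EProper g) (hglsc : LowerSemicontinuous g) (hgc : EConvex g)
    (ρ γ : ℝ) (hρ : 0 < ρ) (hγ : γ = ρ⁻¹)
    (α : ℝ) (hα0 : 0 < α) (hα1 : α < 1)
    (proxfs proxgs proxf proxg : EuclideanSpace ℝ (Fin n) → EuclideanSpace ℝ (Fin n))
    (hproxfs : ∀ z, IsProx (econj f) ρ z (proxfs z))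
    (hproxgs : ∀ z, IsProx (fun μ => econj g (-μ)) ρ z (proxgs z))
    (hproxf : ∀ z, IsProx f γ z (proxf z))
    (hproxg : ∀ z, IsProx g γ z (proxg z))
    (v z : ℕ → EuclideanSpace ℝ (Fin n))
    (hv : ∀ k, v (k+1) = (1 - α) • v k +
      α • ((2:ℝ) • proxgs ((2:ℝ) • proxfs (v k) - v k) - ((2:ℝ) • proxfs (v k) - v k)))
    (hz : ∀ k, z (k+1) = (1 - α) • z k +
      α • ((2:ℝ) • proxg ((2:ℝ) • proxf (z k) - z k) - ((2:ℝ) • proxf (z k) - z k)))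
    (h0 : z 0 = ρ⁻¹ • v 0) :
    ∀ k, z k = ρ⁻¹ • v k := by
  subst hγ
  intro k
  induction k with
  | zero => exact h0
  | succ k ih =>
    set p := proxf (ρ⁻¹ • v k) with hpdef
    set w := (2:ℝ) • p - ρ⁻¹ • v k with hwdef
    set p' := proxg w with hp'def
    have hq : proxfs (v k) = v k - ρ • p :=
      moreau1 f hfp hfc ρ hρ (v k) p (proxfs (v k)) (hproxf _) (hproxfs (v k))
    set u := (2:ℝ) • proxfs (v k) - v k with hudef
    have hu : u = -(ρ • w) := by
      rw [hudef, hq, hwdef]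
      match_scalars <;> (try field_simp) <;> ring
    have hw : -(ρ⁻¹ • u) = w := by
      rw [hu, smul_neg, neg_neg, smul_smul, inv_mul_cancel₀ (ne_of_gt hρ), one_smul]
    have hq' : proxgs u = u + ρ • p' := by
      refine moreau2 g hgp hgc ρ hρ u p' (proxgs u) ?_ (hproxgs u)
      rw [hw]
      exact hproxg w
    rw [hz k, hv k, ih, ← hwdef, ← hudef, hq', hu]
    match_scalars <;> (try field_simp) <;> ring
end

section
/- Let D = {x ∈ ℝⁿ : Ax = b} be a nonempty affine set, C ⊆ ℝⁿ nonempty closed convex, α₁ ∈ (0,1], α₂ ∈ (0,2], and define the GAP envelope F(x) = ½⟨Px,x⟩ - p^{α₂}_C(Px+q), where P = (1-α₁)Id + α₁N, N is the orthogonal projection onto {x : Ax = 0}, q = α₁d with Π_D(x) = Nx + d, and p^{α₂}_C(x) = α₂ r*_C(x) + ((1-α₂)/2)‖x‖² with r_C(x) = ι_C(x) + ½‖x‖². Then F is convex. -/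
open scoped RealInnerProductSpace

private lemma sqcombo {E : Type*} [NormedAddCommGroup E] [NormedSpace ℝ E]
    (u v : E) {a b : ℝ} (ha : 0 ≤ a) (hb : 0 ≤ b) (hab : a + b = 1) :
    ‖a • u + b • v‖ ^ 2 ≤ a * ‖u‖ ^ 2 + b * ‖v‖ ^ 2 := by
  have h1 : ‖a • u + b • v‖ ≤ a * ‖u‖ + b * ‖v‖ := by
    calc ‖a • u + b • v‖ ≤ ‖a • u‖ + ‖b • v‖ := norm_add_le _ _
    _ = a * ‖u‖ + b * ‖v‖ := by
        rw [norm_smul, norm_smul, Real.norm_eq_abs, Real.norm_eq_abs,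
          abs_of_nonneg ha, abs_of_nonneg hb]
  nlinarith [norm_nonneg (a • u + b • v), norm_nonneg u, norm_nonneg v,
    sq_nonneg (‖u‖ - ‖v‖), mul_nonneg ha hb]

theorem stmt18 {n m : ℕ}
    (A : EuclideanSpace ℝ (Fin n) →L[ℝ] EuclideanSpace ℝ (Fin m))
    (b : EuclideanSpace ℝ (Fin m)) (hD : ∃ x, A x = b)
    (C : Set (EuclideanSpace ℝ (Fin n))) (hCne : C.Nonempty)
    (hCcl : IsClosed C) (hCcv : Convex ℝ C)
    (α₁ α₂ : ℝ) (hα₁0 : 0 < α₁) (hα₁1 : α₁ ≤ 1) (hα₂0 : 0 < α₂) (hα₂2 : α₂ ≤ 2)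
    (N : EuclideanSpace ℝ (Fin n) →L[ℝ] EuclideanSpace ℝ (Fin n))
    (hN : ∀ x, N x = (Submodule.orthogonalProjectionOnto (LinearMap.ker (A : EuclideanSpace ℝ (Fin n) →ₗ[ℝ] EuclideanSpace ℝ (Fin m))) x : EuclideanSpace ℝ (Fin n)))
    (d : EuclideanSpace ℝ (Fin n))
    (hproj : ∀ x, A (N x + d) = b ∧ ∀ y, A y = b → ‖(N x + d) - x‖ ≤ ‖y - x‖)
    (P : EuclideanSpace ℝ (Fin n) →L[ℝ] EuclideanSpace ℝ (Fin n))
    (hP : P = (1 - α₁) • (1 : EuclideanSpace ℝ (Fin n) →L[ℝ] EuclideanSpace ℝ (Fin n)) + α₁ • N)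
    (q : EuclideanSpace ℝ (Fin n)) (hq : q = α₁ • d) :
    ConvexOn ℝ Set.univ (fun x =>
      1/2 * ⟪P x, x⟫ -
        (α₂ * (⨆ y : C, (⟪P x + q, (y : EuclideanSpace ℝ (Fin n))⟫ -
            ‖(y : EuclideanSpace ℝ (Fin n))‖^2 / 2)) +
          (1 - α₂)/2 * ‖P x + q‖^2)) := by
  classical
  haveI : Nonempty C := hCne.to_subtype
  -- choose, for each point, a closest point of C
  choose sel hselC hsel using fun u : EuclideanSpace ℝ (Fin n) =>
    hCcl.exists_infDist_eq_dist hCne u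
  have hmin : ∀ u w, w ∈ C → ‖u - sel u‖ ≤ ‖u - w‖ := by
    intro u w hw
    rw [← dist_eq_norm, ← dist_eq_norm, ← hsel u]
    exact Metric.infDist_le_dist_of_mem hw
  -- pointwise identity for each term of the sup
  have hterm : ∀ (u w : EuclideanSpace ℝ (Fin n)),
      ⟪u, w⟫ - ‖w‖^2 / 2 = ‖u‖^2/2 - ‖u - w‖^2/2 := by
    intro u w; rw [norm_sub_sq_real]; ring
  have hbdd : ∀ u : EuclideanSpace ℝ (Fin n),
      BddAbove (Set.range fun y : C =>
        ⟪u, (y : EuclideanSpace ℝ (Fin n))⟫ - ‖(y : EuclideanSpace ℝ (Fin n))‖^2 / 2) := by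
    intro u
    refine ⟨‖u‖^2/2, fun z hz => ?_⟩
    obtain ⟨y, rfl⟩ := hz
    dsimp only
    rw [hterm]
    have := sq_nonneg ‖u - (y : EuclideanSpace ℝ (Fin n))‖
    linarith
  -- the value of the sup
  have hsup : ∀ u : EuclideanSpace ℝ (Fin n),
      (⨆ y : C, (⟪u, (y : EuclideanSpace ℝ (Fin n))⟫ -
        ‖(y : EuclideanSpace ℝ (Fin n))‖^2 / 2)) = ‖u‖^2/2 - ‖u - sel u‖^2/2 := by
    intro u
    apply le_antisymm
    · refine ciSup_le fun y => ?_
      rw [hterm]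
      have h1 := hmin u y y.2
      have h2 : ‖u - sel u‖^2 ≤ ‖u - (y : EuclideanSpace ℝ (Fin n))‖^2 :=
        pow_le_pow_left₀ (norm_nonneg _) h1 2
      linarith
    · calc ‖u‖^2/2 - ‖u - sel u‖^2/2 = ⟪u, sel u⟫ - ‖sel u‖^2 / 2 := (hterm u (sel u)).symm
      _ ≤ _ := le_ciSup (hbdd u) (⟨sel u, hselC u⟩ : C)
  -- the quadratic part
  have hQ : ∀ x, 1/2 * ⟪P x, x⟫ - ‖P x + q‖^2/2
      = α₁*(1-α₁)/2 * ‖x - N x‖^2 - ⟪P x, q⟫ - ‖q‖^2/2 := by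
    intro x
    have e1 : P x = (1-α₁) • x + α₁ • (N x) := by rw [hP]; simp
    have horth : ⟪x - N x, N x⟫ = 0 := by
      rw [hN]
      exact Submodule.starProjection_inner_eq_zero x _ (SetLike.coe_mem _)
    have hp : ⟪x, N x⟫ = ⟪N x, N x⟫ := by
      rw [inner_sub_left] at horth; linarith
    have hq2 : ‖P x + q‖^2 = ‖P x‖^2 + 2*⟪P x, q⟫ + ‖q‖^2 := norm_add_sq_real _ _
    have h4 : ⟪P x, x⟫ = (1-α₁)*⟪x,x⟫ + α₁*⟪N x, N x⟫ := by
      rw [e1, inner_add_left, real_inner_smul_left, real_inner_smul_left,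
        real_inner_comm x (N x), hp]
    have h5 : ‖P x‖^2 = (1-α₁)^2*⟪x,x⟫ + (2*α₁*(1-α₁)+α₁^2)*⟪N x, N x⟫ := by
      rw [← real_inner_self_eq_norm_sq, e1]
      simp only [inner_add_left, inner_add_right, real_inner_smul_left,
        real_inner_smul_right, real_inner_comm x (N x), hp]
      ring
    have h6 : ‖x - N x‖^2 = ⟪x,x⟫ - ⟪N x, N x⟫ := by
      rw [← real_inner_self_eq_norm_sq, inner_sub_left, inner_sub_right, inner_sub_right,
        real_inner_comm x (N x), hp]
      ring
    rw [hq2, h4, h5, h6]; ring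
  -- rewrite the objective function
  have hF : (fun x => 1/2 * ⟪P x, x⟫ -
        (α₂ * (⨆ y : C, (⟪P x + q, (y : EuclideanSpace ℝ (Fin n))⟫ -
            ‖(y : EuclideanSpace ℝ (Fin n))‖^2 / 2)) +
          (1 - α₂)/2 * ‖P x + q‖^2))
      = (fun x => α₁*(1-α₁)/2 * ‖x - N x‖^2 +
          ((α₂/2) * ‖(P x + q) - sel (P x + q)‖^2 + (-⟪P x, q⟫ - ‖q‖^2/2))) := by
    funext x
    rw [hsup (P x + q)]
    have h7 : 1/2 * ⟪P x, x⟫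
        = α₁*(1-α₁)/2 * ‖x - N x‖^2 - ⟪P x, q⟫ - ‖q‖^2/2 + ‖P x + q‖^2/2 := by
      linarith [hQ x]
    rw [h7]; ring
  rw [hF]
  -- convexity of the three pieces
  have hc1 : ConvexOn ℝ (Set.univ : Set (EuclideanSpace ℝ (Fin n)))
      (fun x => α₁*(1-α₁)/2 * ‖x - N x‖^2) := by
    refine ⟨convex_univ, fun x _ y _ a b ha hb hab => ?_⟩
    have hNz : (a•x+b•y) - N (a•x+b•y) = a•(x - N x) + b•(y - N y) := by
      rw [map_add, map_smul, map_smul, smul_sub, smul_sub]; abel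
    have h1 : ‖(a•x+b•y) - N (a•x+b•y)‖^2 ≤ a*‖x - N x‖^2 + b*‖y - N y‖^2 := by
      rw [hNz]; exact sqcombo _ _ ha hb hab
    have hc : 0 ≤ α₁*(1-α₁)/2 :=
      div_nonneg (mul_nonneg hα₁0.le (by linarith)) (by norm_num)
    simp only [smul_eq_mul]
    calc α₁*(1-α₁)/2 * ‖(a•x+b•y) - N (a•x+b•y)‖^2
        ≤ α₁*(1-α₁)/2 * (a*‖x - N x‖^2 + b*‖y - N y‖^2) :=
          mul_le_mul_of_nonneg_left h1 hc
      _ = a * (α₁*(1-α₁)/2 * ‖x - N x‖^2) + b * (α₁*(1-α₁)/2 * ‖y - N y‖^2) := by ring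
  have hc2 : ConvexOn ℝ (Set.univ : Set (EuclideanSpace ℝ (Fin n)))
      (fun x => (α₂/2) * ‖(P x + q) - sel (P x + q)‖^2) := by
    refine ⟨convex_univ, fun x _ y _ a b ha hb hab => ?_⟩
    have hz : P (a•x+b•y) + q = a•(P x + q) + b•(P y + q) := by
      have h0 : a•(P x + q) + b•(P y + q) = a • P x + b • P y + (a+b) • q := by
        rw [smul_add, smul_add, add_smul]; abel
      rw [h0, hab, one_smul, map_add, map_smul, map_smul]
    set u := P x + q with hu
    set v := P y + q with hv
    have hmem : a • sel u + b • sel v ∈ C := hCcv (hselC u) (hselC v) ha hb hab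
    have hle : ‖(P (a•x+b•y) + q) - sel (P (a•x+b•y) + q)‖
        ≤ ‖a•(u - sel u) + b•(v - sel v)‖ := by
      have hdiff : (a•u + b•v) - (a • sel u + b • sel v)
          = a•(u - sel u) + b•(v - sel v) := by
        rw [smul_sub, smul_sub]; abel
      rw [hz, ← hdiff]
      exact hmin _ _ hmem
    have h2 : ‖(P (a•x+b•y) + q) - sel (P (a•x+b•y) + q)‖^2
        ≤ a*‖u - sel u‖^2 + b*‖v - sel v‖^2 := by
      calc ‖(P (a•x+b•y) + q) - sel (P (a•x+b•y) + q)‖^2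
          ≤ ‖a•(u - sel u) + b•(v - sel v)‖^2 := pow_le_pow_left₀ (norm_nonneg _) hle 2
        _ ≤ a*‖u - sel u‖^2 + b*‖v - sel v‖^2 := sqcombo _ _ ha hb hab
    simp only [smul_eq_mul]
    calc (α₂/2) * ‖(P (a•x+b•y) + q) - sel (P (a•x+b•y) + q)‖^2
        ≤ (α₂/2) * (a*‖u - sel u‖^2 + b*‖v - sel v‖^2) :=
          mul_le_mul_of_nonneg_left h2 (by linarith)
      _ = a * ((α₂/2) * ‖u - sel u‖^2) + b * ((α₂/2) * ‖v - sel v‖^2) := by ring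
  have hc3 : ConvexOn ℝ (Set.univ : Set (EuclideanSpace ℝ (Fin n)))
      (fun x => -⟪P x, q⟫ - ‖q‖^2/2) := by
    refine ⟨convex_univ, fun x _ y _ a b ha hb hab => le_of_eq ?_⟩
    have h2 : ⟪P (a•x+b•y), q⟫ = a*⟪P x, q⟫ + b*⟪P y, q⟫ := by
      rw [map_add, map_smul, map_smul, inner_add_left, real_inner_smul_left,
        real_inner_smul_left]
    simp only [smul_eq_mul]
    rw [h2]
    linear_combination (‖q‖^2/2) * hab
  exact hc1.add (hc2.add hc3)
end
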